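/- Suppose (ρ_i) is an AM-bounding sequence for u : X → V, and η is a nonnegative L-Lipschitz function supported in a bounded set U and constant on an open set V₀ compactly contained in U. Then (η ρ_i + L·‖u‖·χ_{U \ V₀})_i is an AM-bounding sequence for η u. -/

import Mathlib

open MeasureTheory Filter Set Metric
open scoped ENNReal NNReal Topology

noncomputable section

namespace BVAMPaper

/-- A nonconstant compact rectifiable curve in `X`, parametrized by arclength on `[0, len]`. -/
structure Curve (X : Type*) [MetricSpace X] : Type _ where
  len : ℝ
  len_pos : 0 < len
  toFun : ℝ → X
  lip : LipschitzOnWith 1 toFun (Set.Icc 0 len)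
  nonconst : ∃ s ∈ Set.Icc (0:ℝ) len, ∃ t ∈ Set.Icc (0:ℝ) len, toFun s ≠ toFun t

variable {X : Type*} [MetricSpace X]

/-- The line integral `∫_γ ρ ds` of `ρ` over the arclength-parametrized curve `γ`. -/
def Curve.integral (γ : Curve X) (ρ : X → ℝ≥0∞) : ℝ≥0∞ :=
  ∫⁻ t in Set.Icc 0 γ.len, ρ (γ.toFun t)

/-- The line integral of `ρ` over the subcurve `γ|_{[s,t]}`. -/
def Curve.integralOn (γ : Curve X) (s t : ℝ) (ρ : X → ℝ≥0∞) : ℝ≥0∞ :=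
  ∫⁻ r in Set.Icc s t, ρ (γ.toFun r)

variable [MeasurableSpace X]

/-- The 1-modulus of a family of curves. -/
def Mod1 (μ : Measure X) (Γ : Set (Curve X)) : ℝ≥0∞ :=
  ⨅ (ρ : X → ℝ≥0∞) (_ : Measurable ρ ∧ ∀ γ ∈ Γ, 1 ≤ Curve.integral γ ρ), ∫⁻ x, ρ x ∂μ

/-- A sequence admissible for the AM-modulus of `Γ`. -/
def AMAdmissible (Γ : Set (Curve X)) (ρ : ℕ → X → ℝ≥0∞) : Prop :=
  (∀ i, Measurable (ρ i)) ∧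
    ∀ γ ∈ Γ, 1 ≤ Filter.atTop.liminf fun i => Curve.integral γ (ρ i)

/-- The AM-modulus of a family of curves. -/
def AM (μ : Measure X) (Γ : Set (Curve X)) : ℝ≥0∞ :=
  ⨅ (ρ : ℕ → X → ℝ≥0∞) (_ : AMAdmissible Γ ρ),
    Filter.atTop.liminf fun i => ∫⁻ x, ρ i x ∂μ

section Target
variable {Y : Type*} [EMetricSpace Y]

/-- `g` is an upper gradient of `u`. -/
def IsUpperGradient (u : X → Y) (g : X → ℝ≥0∞) : Prop :=
  ∀ γ : Curve X, edist (u (γ.toFun γ.len)) (u (γ.toFun 0)) ≤ Curve.integral γ g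

/-- `(ρ i)` is an AM-bounding sequence for `u` relative to the set `U`. -/
def AMBoundingOn (μ : Measure X) (U : Set X) (u : X → Y) (ρ : ℕ → X → ℝ≥0∞) : Prop :=
  (∀ i, Measurable (ρ i)) ∧
    ∃ Γ : Set (Curve X), AM μ Γ = 0 ∧
      ∀ γ : Curve X, γ ∉ Γ → (∀ r ∈ Set.Icc (0:ℝ) γ.len, γ.toFun r ∈ U) →
        ∃ N : Set ℝ, volume N = 0 ∧
          ∀ s t : ℝ, s ∈ Set.Icc (0:ℝ) γ.len → t ∈ Set.Icc (0:ℝ) γ.len →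
            s ∉ N → t ∉ N → s < t →
              edist (u (γ.toFun s)) (u (γ.toFun t)) ≤
                Filter.atTop.liminf fun i => Curve.integralOn γ s t (ρ i)

/-- `(ρ i)` is an AM-bounding sequence for `u`. -/
def AMBounding (μ : Measure X) (u : X → Y) (ρ : ℕ → X → ℝ≥0∞) : Prop :=
  AMBoundingOn μ Set.univ u ρ

/-- A strong bounding sequence: the bounding inequality holds along every nonconstant
compact rectifiable curve, with no exceptional curve family. -/
def StrongBounding (u : X → Y) (ρ : ℕ → X → ℝ≥0∞) : Prop :=
  (∀ i, Measurable (ρ i)) ∧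
    ∀ γ : Curve X, ∃ N : Set ℝ, volume N = 0 ∧
      ∀ s t : ℝ, s ∈ Set.Icc (0:ℝ) γ.len → t ∈ Set.Icc (0:ℝ) γ.len →
        s ∉ N → t ∉ N → s < t →
          edist (u (γ.toFun s)) (u (γ.toFun t)) ≤
            Filter.atTop.liminf fun i => Curve.integralOn γ s t (ρ i)

/-- The AM-BV energy of `u` relative to the set `U`. -/
def DAMOn (μ : Measure X) (u : X → Y) (U : Set X) : ℝ≥0∞ :=
  ⨅ (ρ : ℕ → X → ℝ≥0∞) (_ : AMBoundingOn μ U u ρ),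
    Filter.atTop.liminf fun i => ∫⁻ x in U, ρ i x ∂μ

/-- The total AM-BV energy `‖D_AM u‖(X)`. -/
def DAM (μ : Measure X) (u : X → Y) : ℝ≥0∞ := DAMOn μ u Set.univ

/-- `‖D_AM u‖(A)` for a general set `A`, via approximation by open supersets. -/
def DAMmeas (μ : Measure X) (u : X → Y) (A : Set X) : ℝ≥0∞ :=
  ⨅ (U : Set X) (_ : IsOpen U ∧ A ⊆ U), DAMOn μ u U

/-- `u ∈ L¹(X : Y)`. -/
def MemL1 (μ : Measure X) (u : X → Y) : Prop :=
  AEStronglyMeasurable u μ ∧ ∃ y₀ : Y, ∫⁻ x, edist (u x) y₀ ∂μ < ∞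

/-- `u ∈ BV_AM(X : Y)`. -/
def MemBVAM (μ : Measure X) (u : X → Y) : Prop :=
  MemL1 μ u ∧ ∃ ρ : ℕ → X → ℝ≥0∞, AMBounding μ u ρ ∧
    (Filter.atTop.liminf fun i => ∫⁻ x, ρ i x ∂μ) < ∞

/-- `u ∈ N^{1,1}(X : Y)`. -/
def MemN11 (μ : Measure X) (u : X → Y) : Prop :=
  MemL1 μ u ∧ ∃ g : X → ℝ≥0∞, Measurable g ∧ IsUpperGradient u g ∧ ∫⁻ x, g x ∂μ < ∞

/-- The relaxed BV energy `‖Du‖(X)` of `u`, via approximation in `L¹` by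
Newton–Sobolev maps with their upper gradients. -/
def DBV (μ : Measure X) (u : X → Y) : ℝ≥0∞ :=
  ⨅ (v : ℕ → X → Y) (g : ℕ → X → ℝ≥0∞)
    (_ : (∀ k, MemL1 μ (v k) ∧ Measurable (g k) ∧ IsUpperGradient (v k) (g k)) ∧
        Tendsto (fun k => ∫⁻ x, edist (v k x) (u x) ∂μ) atTop (nhds 0)),
    Filter.atTop.liminf fun k => ∫⁻ x, g k x ∂μ

/-- `u ∈ BV(X : Y)` via relaxation. -/
def MemBV (μ : Measure X) (u : X → Y) : Prop := MemL1 μ u ∧ DBV μ u < ∞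

/-- The pointwise (upper) Lipschitz constant function. -/
def lipDeriv (u : X → Y) (x : X) : ℝ≥0∞ :=
  Filter.limsup (fun y => edist (u y) (u x) / edist y x) (𝓝[≠] x)

end Target

/-- `μ` is a doubling measure with constant `Cd`. -/
def Doubling (μ : Measure X) (Cd : ℝ≥0) : Prop :=
  ∀ (x : X) (r : ℝ), 0 < r →
    0 < μ (ball x r) ∧ μ (ball x (2 * r)) ≤ Cd * μ (ball x r) ∧ μ (ball x (2 * r)) < ∞

/-- `X` supports a 1-Poincaré inequality with constants `C`, `lam`. -/
def Poincare (μ : Measure X) (C lam : ℝ) : Prop :=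
  ∀ (f : X → ℝ) (g : X → ℝ≥0∞), LocallyIntegrable f μ → Measurable g → IsUpperGradient f g →
    ∀ (x : X) (r : ℝ), 0 < r →
      (μ (ball x r))⁻¹ * ∫⁻ y in ball x r, (‖f y - ⨍ z in ball x r, f z ∂μ‖₊ : ℝ≥0∞) ∂μ ≤
        ENNReal.ofReal (C * r) *
          ((μ (ball x (lam * r)))⁻¹ * ∫⁻ y in ball x (lam * r), g y ∂μ)

/-- `X` supports an AM-Poincaré inequality for `V`-valued maps. -/
def AMPoincare (μ : Measure X) (V : Type*) [NormedAddCommGroup V] [NormedSpace ℝ V]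
    (C lam : ℝ) : Prop :=
  ∀ (u : X → V) (ρ : ℕ → X → ℝ≥0∞), MemBVAM μ u → AMBounding μ u ρ →
    ∀ (x : X) (r : ℝ), 0 < r →
      (μ (ball x r))⁻¹ * ∫⁻ y in ball x r, (‖u y - ⨍ z in ball x r, u z ∂μ‖₊ : ℝ≥0∞) ∂μ ≤
        ENNReal.ofReal (C * r) *
          Filter.atTop.liminf fun i =>
            (μ (ball x (lam * r)))⁻¹ * ∫⁻ y in ball x (lam * r), ρ i y ∂μ

section MetricTarget
variable {Y : Type*} [MetricSpace Y]

/-- `u` is approximately continuous at `x`. -/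
def ApproxCont (μ : Measure X) (u : X → Y) (x : X) : Prop :=
  ∃ y : Y, ∀ ε : ℝ, 0 < ε →
    Filter.limsup (fun r => μ (ball x r \ u ⁻¹' ball y ε) / μ (ball x r)) (𝓝[>] (0:ℝ)) = 0

/-- The jump set of `u`: points where `u` fails to be approximately continuous. -/
def jumpSet (μ : Measure X) (u : X → Y) : Set X := {x | ¬ ApproxCont μ u x}

end MetricTarget

/-- The codimension-one Hausdorff measure of `A` relative to `μ`. -/
def codimOne (μ : Measure X) (A : Set X) : ℝ≥0∞ :=
  ⨆ (δ : ℝ) (_ : 0 < δ),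
    ⨅ (c : ℕ → X) (r : ℕ → ℝ)
      (_ : (∀ i, 0 < r i ∧ r i ≤ δ) ∧ A ⊆ ⋃ i, ball (c i) (r i)),
      ∑' i, μ (ball (c i) (r i)) / ENNReal.ofReal (r i)



section AuxLemmas

lemma ofReal_norm_eq_coe_nnnorm {E : Type*} [SeminormedAddCommGroup E] (a : E) :
    ENNReal.ofReal ‖a‖ = (‖a‖₊ : ℝ≥0∞) := ofReal_norm a

lemma edist_eq_coe_nnnorm_sub {E : Type*} [SeminormedAddCommGroup E] (a b : E) :
    edist a b = (‖a - b‖₊ : ℝ≥0∞) := edist_eq_enorm_sub a b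

lemma edist_eq_coe_nnnorm {E : Type*} [SeminormedAddCommGroup E] (a : E) :
    edist a 0 = (‖a‖₊ : ℝ≥0∞) := edist_zero_right a


/-- superadditivity of liminf in ℝ≥0∞ -/
lemma liminf_superadd (u v : ℕ → ℝ≥0∞) :
    atTop.liminf u + atTop.liminf v ≤ atTop.liminf (fun i => u i + v i) := by
  rw [liminf_eq_iSup_iInf_of_nat, liminf_eq_iSup_iInf_of_nat, liminf_eq_iSup_iInf_of_nat]
  rw [ENNReal.iSup_add_iSup_of_monotone, ]
  · exact iSup_mono fun n => le_iInf₂ fun i hi =>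
      add_le_add (iInf₂_le i hi) (iInf₂_le i hi)
  · exact fun a b hab => le_iInf₂ fun i hi => iInf₂_le i (le_trans hab hi)
  · exact fun a b hab => le_iInf₂ fun i hi => iInf₂_le i (le_trans hab hi)

lemma const_mul_liminf_le (c : ℝ≥0∞) (u : ℕ → ℝ≥0∞) :
    c * atTop.liminf u ≤ atTop.liminf (fun i => c * u i) := by
  have := ENNReal.le_liminf_mul (f := atTop) (u := fun _ : ℕ => c) (v := u)
  simp only [Filter.liminf_const] at this
  exact this

lemma sum_liminf_le (n : ℕ) (a : ℕ → ℕ → ℝ≥0∞) :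
    ∑ j ∈ Finset.range n, atTop.liminf (fun i => a i j) ≤
      atTop.liminf (fun i => ∑ j ∈ Finset.range n, a i j) := by
  induction n with
  | zero => simp
  | succ n ih =>
      simp only [Finset.sum_range_succ]
      exact le_trans (add_le_add_left ih _) (liminf_superadd _ _)


end AuxLemmas


section LipA
variable {f : ℝ → ℝ} {L : ℝ≥0} {W O C E T : Set ℝ} {c : ℝ}

/-- the cumulative volume function -/
def Vol (O : Set ℝ) (a : ℝ) (x : ℝ) : ℝ := (volume (O ∩ Icc a x)).toReal

lemma vol_fin (O : Set ℝ) (a x : ℝ) : volume (O ∩ Icc a x) ≠ ∞ :=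
  ne_top_of_le_ne_top (by simp [Real.volume_Icc]) (measure_mono inter_subset_right)

lemma Vol_nonneg (O : Set ℝ) (a x : ℝ) : 0 ≤ Vol O a x := ENNReal.toReal_nonneg

lemma Vol_mono (O : Set ℝ) (a : ℝ) {x y : ℝ} (h : x ≤ y) : Vol O a x ≤ Vol O a y :=
  ENNReal.toReal_mono (vol_fin O a y)
    (measure_mono (inter_subset_inter_right _ (Icc_subset_Icc_right h)))

lemma Vol_add_le (O : Set ℝ) (a : ℝ) {x y : ℝ} (h : x ≤ y) :
    Vol O a y ≤ Vol O a x + (y - x) := by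
  have hsub : O ∩ Icc a y ⊆ (O ∩ Icc a x) ∪ Ioc x y := by
    rintro r ⟨hrO, hra, hry⟩
    rcases le_or_gt r x with h'|h'
    · exact Or.inl ⟨hrO, hra, h'⟩
    · exact Or.inr ⟨h', hry⟩
  calc Vol O a y ≤ ((volume (O ∩ Icc a x)) + volume (Ioc x y)).toReal := by
        refine ENNReal.toReal_mono ?_ (le_trans (measure_mono hsub) (measure_union_le _ _))
        exact ENNReal.add_ne_top.2 ⟨vol_fin O a x, by simp [Real.volume_Ioc]⟩
    _ = Vol O a x + (y - x) := by
        rw [ENNReal.toReal_add (vol_fin O a x) (by simp [Real.volume_Ioc])]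
        simp [Vol, Real.volume_Ioc, ENNReal.toReal_ofReal (sub_nonneg.2 h)]

lemma Vol_continuous (O : Set ℝ) (a : ℝ) : Continuous (Vol O a) := by
  refine LipschitzWith.continuous (K := 1) (LipschitzWith.of_dist_le_mul fun x y => ?_)
  rw [Real.dist_eq, Real.dist_eq, NNReal.coe_one, one_mul]
  rcases le_total x y with h|h
  · rw [abs_sub_comm, abs_of_nonneg (sub_nonneg.2 (Vol_mono O a h)), abs_sub_comm,
      abs_of_nonneg (sub_nonneg.2 h)]
    have := Vol_add_le O a h; linarith
  · rw [abs_of_nonneg (sub_nonneg.2 (Vol_mono O a h)), abs_of_nonneg (sub_nonneg.2 h)]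
    have := Vol_add_le O a h; linarith

lemma Vol_incr (hO : MeasurableSet O) (a : ℝ) {x y : ℝ} (hax : a ≤ x) (h : x ≤ y)
    (hsub : Ioc x y ⊆ O) : Vol O a x + (y - x) ≤ Vol O a y := by
  have hset : O ∩ Icc a y = (O ∩ Icc a x) ∪ Ioc x y := by
    ext r
    constructor
    · rintro ⟨hrO, hra, hry⟩
      rcases le_or_gt r x with h'|h'
      · exact Or.inl ⟨hrO, hra, h'⟩
      · exact Or.inr ⟨h', hry⟩
    · rintro (⟨hrO, hra, hrx⟩|hr)
      · exact ⟨hrO, hra, le_trans hrx h⟩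
      · exact ⟨hsub hr, le_trans hax hr.1.le, hr.2⟩
  have hdisj : Disjoint (O ∩ Icc a x) (Ioc x y) :=
    disjoint_left.2 fun r hr hr' => absurd hr.2.2 (not_le.2 hr'.1)
  have hvol : volume (O ∩ Icc a y) = volume (O ∩ Icc a x) + volume (Ioc x y) := by
    rw [hset, measure_union hdisj measurableSet_Ioc]
  rw [Vol, Vol, hvol, ENNReal.toReal_add (vol_fin O a x) (by simp [Real.volume_Ioc])]
  simp [Real.volume_Ioc, ENNReal.toReal_ofReal (sub_nonneg.2 h)]

lemma Vol_superadd (hO : MeasurableSet O) {a x₀ x : ℝ} (h1 : a ≤ x₀) (h2 : x₀ ≤ x) :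
    Vol O a x₀ + Vol O x₀ x ≤ Vol O a x := by
  have hIoc : volume (O ∩ Icc x₀ x) = volume (O ∩ Ioc x₀ x) := by
    refine le_antisymm ?_ (measure_mono (inter_subset_inter_right _ Ioc_subset_Icc_self))
    calc volume (O ∩ Icc x₀ x) ≤ volume ((O ∩ Ioc x₀ x) ∪ {x₀}) := by
          refine measure_mono ?_
          rintro r ⟨h1', h2'⟩
          rcases eq_or_lt_of_le h2'.1 with rfl|hlt'
          · exact Or.inr rfl
          · exact Or.inl ⟨h1', hlt', h2'.2⟩
      _ ≤ volume (O ∩ Ioc x₀ x) + volume ({x₀} : Set ℝ) := measure_union_le _ _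
      _ = volume (O ∩ Ioc x₀ x) := by simp
  have hdisj : Disjoint (O ∩ Icc a x₀) (O ∩ Ioc x₀ x) :=
    disjoint_left.2 fun r hr hr' => absurd hr.2.2 (not_le.2 hr'.2.1)
  have hm : MeasurableSet (O ∩ Ioc x₀ x) := hO.inter measurableSet_Ioc
  have hle : volume (O ∩ Icc a x₀) + volume (O ∩ Ioc x₀ x) ≤ volume (O ∩ Icc a x) := by
    rw [← measure_union hdisj hm]
    refine measure_mono ?_
    rintro r (⟨h1',h2'⟩|⟨h1',h2'⟩)
    · exact ⟨h1', h2'.1, le_trans h2'.2 h2⟩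
    · exact ⟨h1', le_trans h1 h2'.1.le, h2'.2⟩
  rw [Vol, Vol, Vol, hIoc]
  rw [← ENNReal.toReal_add (vol_fin O a x₀)
    (ne_top_of_le_ne_top (by simp [Real.volume_Ioc]) (measure_mono inter_subset_right))]
  exact ENNReal.toReal_mono (vol_fin O a x) hle

/-- Step 1: estimate when `Icc a b ⊆ W ∪ O`. -/
lemma lipA0 (hf : LipschitzWith L f) (hW : IsOpen W) (hWc : ∀ x ∈ W, f x = c)
    (hO : IsOpen O) {a b : ℝ} (hab : a ≤ b)
    (hcov : Icc a b ⊆ W ∪ O) :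
    |f b - f a| ≤ L * Vol O a b := by
  set S : Set ℝ := Icc a b ∩ {x | |f x - f a| ≤ L * Vol O a x} with hS
  have hSclosed : IsClosed S :=
    isClosed_Icc.inter (isClosed_le ((hf.continuous.sub continuous_const).abs)
      (continuous_const.mul (Vol_continuous O a)))
  have haS : a ∈ S := ⟨⟨le_rfl, hab⟩, by
    simp only [mem_setOf_eq, sub_self, abs_zero]
    exact mul_nonneg L.2 (Vol_nonneg _ _ _)⟩
  have hbdd : BddAbove S := BddAbove.mono (inter_subset_left) bddAbove_Icc
  set x₀ := sSup S with hx₀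
  have hx₀S : x₀ ∈ S := hSclosed.csSup_mem ⟨a, haS⟩ hbdd
  have hx₀b : x₀ ≤ b := hx₀S.1.2
  rcases eq_or_lt_of_le hx₀b with heq|hlt
  · rw [← heq]; exact hx₀S.2
  · exfalso
    have hx₀ab : x₀ ∈ Icc a b := hx₀S.1
    rcases hcov hx₀ab with hxW|hxO
    · obtain ⟨δ, hδ, hball⟩ := Metric.isOpen_iff.1 hW _ hxW
      set x := min b (x₀ + δ/2) with hx
      have hxx₀ : x₀ < x := lt_min hlt (by linarith)
      have h2 : x ≤ x₀ + δ/2 := min_le_right _ _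
      have hxW' : x ∈ W := hball (by
        rw [Metric.mem_ball, Real.dist_eq, abs_of_nonneg (by linarith)]; linarith)
      have : x ∈ S := ⟨⟨le_trans hx₀ab.1 hxx₀.le, min_le_left _ _⟩, by
        simp only [mem_setOf_eq]
        have h0 := hx₀S.2
        simp only [mem_setOf_eq] at h0
        rw [hWc x₀ hxW] at h0
        rw [hWc x hxW']
        exact le_trans h0 (mul_le_mul_of_nonneg_left (Vol_mono O a hxx₀.le) L.2)⟩
      exact absurd (le_csSup hbdd this) (not_le.2 hxx₀)
    · obtain ⟨δ, hδ, hball⟩ := Metric.isOpen_iff.1 hO _ hxO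
      set x := min b (x₀ + δ/2) with hx
      have hxx₀ : x₀ < x := lt_min hlt (by linarith)
      have h2 : x ≤ x₀ + δ/2 := min_le_right _ _
      have hsub : Ioc x₀ x ⊆ O := fun y hy => hball (by
        rw [Metric.mem_ball, Real.dist_eq, abs_of_nonneg (by linarith [hy.1])]
        linarith [hy.2])
      have hVol : Vol O a x₀ + (x - x₀) ≤ Vol O a x :=
        Vol_incr hO.measurableSet a hx₀ab.1 hxx₀.le hsub
      have hfd : |f x - f x₀| ≤ (L : ℝ) * (x - x₀) := by
        have := hf.dist_le_mul x x₀
        rwa [Real.dist_eq, Real.dist_eq,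
          abs_of_nonneg (show (0:ℝ) ≤ x - x₀ by linarith)] at this
      have : x ∈ S := ⟨⟨le_trans hx₀ab.1 hxx₀.le, min_le_left _ _⟩, by
        simp only [mem_setOf_eq]
        calc |f x - f a| ≤ |f x - f x₀| + |f x₀ - f a| := abs_sub_le _ _ _
          _ ≤ L * (x - x₀) + L * Vol O a x₀ := add_le_add hfd hx₀S.2
          _ ≤ L * Vol O a x := by rw [← mul_add]
                                  exact mul_le_mul_of_nonneg_left (by linarith) L.2⟩
      exact absurd (le_csSup hbdd this) (not_le.2 hxx₀)


/-- Step 2: estimate when only `Ioc a b ⊆ W ∪ O`. -/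
lemma lipA0half (hf : LipschitzWith L f) (hW : IsOpen W) (hWc : ∀ x ∈ W, f x = c)
    (hO : IsOpen O) {a b : ℝ} (hab : a ≤ b)
    (hcov : Ioc a b ⊆ W ∪ O) :
    |f b - f a| ≤ L * Vol O a b := by
  rcases eq_or_lt_of_le hab with rfl|hab'
  · simp only [sub_self, abs_zero]
    exact mul_nonneg L.2 (Vol_nonneg O a a)
  refine le_of_forall_pos_le_add fun ε hε => ?_
  set w := min b (a + ε / (L + 1)) with hw
  have hεL : (0:ℝ) < ε / (L + 1) := by positivity
  have haw : a < w := lt_min hab' (by linarith)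
  have hwb : w ≤ b := min_le_left _ _
  have h1 : |f b - f w| ≤ L * Vol O w b := by
    refine lipA0 hf hW hWc hO hwb fun y hy => hcov ⟨lt_of_lt_of_le haw hy.1, hy.2⟩
  have h2 : |f w - f a| ≤ (L:ℝ) * (w - a) := by
    have := hf.dist_le_mul w a
    rwa [Real.dist_eq, Real.dist_eq,
      abs_of_nonneg (show (0:ℝ) ≤ w - a by linarith)] at this
  have h3 : Vol O w b ≤ Vol O a b := by
    refine ENNReal.toReal_mono (vol_fin O a b)
      (measure_mono (inter_subset_inter_right _ (Icc_subset_Icc_left haw.le)))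
  have h4 : (L:ℝ) * (w - a) ≤ ε := by
    have hwa : w - a ≤ ε / (L + 1) := by
      have := min_le_right b (a + ε / (L + 1)); linarith
    calc (L:ℝ) * (w - a) ≤ (L:ℝ) * (ε / (L + 1)) :=
          mul_le_mul_of_nonneg_left hwa L.2
      _ ≤ ε := by
          have hL1 : (0:ℝ) < (L:ℝ) + 1 := by positivity
          rw [mul_comm, div_mul_eq_mul_div, div_le_iff₀ hL1]
          nlinarith [L.2, hε.le]
  calc |f b - f a| ≤ |f b - f w| + |f w - f a| := abs_sub_le _ _ _
    _ ≤ L * Vol O w b + (L:ℝ) * (w - a) := add_le_add h1 h2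
    _ ≤ L * Vol O a b + ε := add_le_add (mul_le_mul_of_nonneg_left h3 L.2) h4

/-- Step 3: estimate with a closed exceptional set `C` on which `f = 0`. -/
lemma lipAc (hf : LipschitzWith L f) (hW : IsOpen W) (hWc : ∀ x ∈ W, f x = c)
    (hC : IsClosed C) (hC0 : ∀ x ∈ C, f x = 0) (hO : IsOpen O) {a b : ℝ} (hab : a ≤ b)
    (hcov : ∀ x ∈ Icc a b, x ∈ W ∨ x ∈ C ∨ x ∈ O) :
    |f b - f a| ≤ L * Vol O a b := by
  set S : Set ℝ := Icc a b ∩ {x | |f x - f a| ≤ L * Vol O a x} with hS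
  have hSclosed : IsClosed S :=
    isClosed_Icc.inter (isClosed_le ((hf.continuous.sub continuous_const).abs)
      (continuous_const.mul (Vol_continuous O a)))
  have haS : a ∈ S := ⟨⟨le_rfl, hab⟩, by
    simp only [mem_setOf_eq, sub_self, abs_zero]
    exact mul_nonneg L.2 (Vol_nonneg _ _ _)⟩
  have hbdd : BddAbove S := BddAbove.mono (inter_subset_left) bddAbove_Icc
  set x₀ := sSup S with hx₀
  have hx₀S : x₀ ∈ S := hSclosed.csSup_mem ⟨a, haS⟩ hbdd
  have hx₀b : x₀ ≤ b := hx₀S.1.2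
  have hx₀P := hx₀S.2
  simp only [mem_setOf_eq] at hx₀P
  rcases eq_or_lt_of_le hx₀b with heq|hlt
  · rw [← heq]; exact hx₀P
  · exfalso
    have hx₀ab : x₀ ∈ Icc a b := hx₀S.1
    have notmem : ∀ x ∈ S, x ≤ x₀ := fun x hx => le_csSup hbdd hx
    rcases hcov x₀ hx₀ab with hxW|hrest
    · obtain ⟨δ, hδ, hball⟩ := Metric.isOpen_iff.1 hW _ hxW
      set x := min b (x₀ + δ/2) with hx
      have hxx₀ : x₀ < x := lt_min hlt (by linarith)
      have h2 : x ≤ x₀ + δ/2 := min_le_right _ _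
      have hxW' : x ∈ W := hball (by
        rw [Metric.mem_ball, Real.dist_eq, abs_of_nonneg (by linarith)]; linarith)
      have : x ∈ S := ⟨⟨le_trans hx₀ab.1 hxx₀.le, min_le_left _ _⟩, by
        simp only [mem_setOf_eq]
        have h0 := hx₀P
        rw [hWc x₀ hxW] at h0
        rw [hWc x hxW']
        exact le_trans h0 (mul_le_mul_of_nonneg_left (Vol_mono O a hxx₀.le) L.2)⟩
      exact absurd (notmem x this) (not_le.2 hxx₀)
    rcases hrest with hxC|hxO
    · by_cases hacc : ∀ δ > 0, (C ∩ Ioc x₀ (min b (x₀ + δ))).Nonempty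
      · obtain ⟨x, hxC', hxIoc⟩ := hacc (b - x₀) (by linarith)
        have hxb : x ≤ b := le_trans hxIoc.2 (min_le_left _ _)
        have : x ∈ S := ⟨⟨le_trans hx₀ab.1 hxIoc.1.le, hxb⟩, by
          simp only [mem_setOf_eq]
          rw [hC0 x hxC']
          rw [hC0 x₀ hxC] at hx₀P
          exact le_trans hx₀P (mul_le_mul_of_nonneg_left (Vol_mono O a hxIoc.1.le) L.2)⟩
        exact absurd (notmem x this) (not_le.2 hxIoc.1)
      · push_neg at hacc
        obtain ⟨δ, hδ, hempty⟩ := hacc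
        set x := min b (x₀ + δ) with hx
        have hxx₀ : x₀ < x := lt_min hlt (by linarith)
        have hxb : x ≤ b := min_le_left _ _
        have hcov' : Ioc x₀ x ⊆ W ∪ O := by
          intro y hy
          have hyC : y ∉ C := fun hyC => (Set.not_nonempty_empty
            (hempty ▸ (⟨y, hyC, hy⟩ : (C ∩ Ioc x₀ x).Nonempty)))
          rcases hcov y ⟨le_trans hx₀ab.1 hy.1.le, le_trans hy.2 hxb⟩ with h|h|h
          · exact Or.inl h
          · exact absurd h hyC
          · exact Or.inr h
        have h1 : |f x - f x₀| ≤ L * Vol O x₀ x := lipA0half hf hW hWc hO hxx₀.le hcov'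
        have h2' : Vol O a x₀ + Vol O x₀ x ≤ Vol O a x :=
          Vol_superadd hO.measurableSet hx₀ab.1 hxx₀.le
        have : x ∈ S := ⟨⟨le_trans hx₀ab.1 hxx₀.le, hxb⟩, by
          simp only [mem_setOf_eq]
          calc |f x - f a| ≤ |f x - f x₀| + |f x₀ - f a| := abs_sub_le _ _ _
            _ ≤ L * Vol O x₀ x + L * Vol O a x₀ := add_le_add h1 hx₀P
            _ ≤ L * Vol O a x := by
                rw [← mul_add]
                exact mul_le_mul_of_nonneg_left (by linarith) L.2⟩
        exact absurd (notmem x this) (not_le.2 hxx₀)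
    · obtain ⟨δ, hδ, hball⟩ := Metric.isOpen_iff.1 hO _ hxO
      set x := min b (x₀ + δ/2) with hx
      have hxx₀ : x₀ < x := lt_min hlt (by linarith)
      have h2 : x ≤ x₀ + δ/2 := min_le_right _ _
      have hsub : Ioc x₀ x ⊆ O := fun y hy => hball (by
        rw [Metric.mem_ball, Real.dist_eq, abs_of_nonneg (by linarith [hy.1])]
        linarith [hy.2])
      have hVol : Vol O a x₀ + (x - x₀) ≤ Vol O a x :=
        Vol_incr hO.measurableSet a hx₀ab.1 hxx₀.le hsub
      have hfd : |f x - f x₀| ≤ (L : ℝ) * (x - x₀) := by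
        have := hf.dist_le_mul x x₀
        rwa [Real.dist_eq, Real.dist_eq,
          abs_of_nonneg (show (0:ℝ) ≤ x - x₀ by linarith)] at this
      have : x ∈ S := ⟨⟨le_trans hx₀ab.1 hxx₀.le, min_le_left _ _⟩, by
        simp only [mem_setOf_eq]
        calc |f x - f a| ≤ |f x - f x₀| + |f x₀ - f a| := abs_sub_le _ _ _
          _ ≤ L * (x - x₀) + L * Vol O a x₀ := add_le_add hfd hx₀P
          _ ≤ L * Vol O a x := by rw [← mul_add]
                                  exact mul_le_mul_of_nonneg_left (by linarith) L.2⟩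
      exact absurd (notmem x this) (not_le.2 hxx₀)

/-- Main Lipschitz estimate through a constancy set `W`, zero set `E`, and measurable `T`. -/
lemma lipA (hf : LipschitzWith L f) (hW : IsOpen W) (hWc : ∀ x ∈ W, f x = c)
    (hE : ∀ x ∈ E, f x = 0) (hT : MeasurableSet T) {a b : ℝ} (hab : a ≤ b)
    (hcov : ∀ x ∈ Icc a b, x ∈ W ∨ x ∈ E ∨ x ∈ T) :
    |f b - f a| ≤ L * (volume (T ∩ Icc a b)).toReal := by
  refine le_of_forall_pos_le_add fun ε hε => ?_
  set κ := ε / (L + 1) with hκ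
  have hκ0 : 0 < κ := by positivity
  have hC : IsClosed (closure E) := isClosed_closure
  have hC0 : ∀ x ∈ closure E, f x = 0 := by
    have : closure E ⊆ f ⁻¹' {0} :=
      closure_minimal (fun x hx => hE x hx) (isClosed_singleton.preimage hf.continuous)
    exact fun x hx => this hx
  have hfin : volume (T ∩ Icc a b) ≠ ∞ :=
    ne_top_of_le_ne_top (by simp [Real.volume_Icc]) (measure_mono inter_subset_right)
  have hlt : volume (T ∩ Icc a b) < volume (T ∩ Icc a b) + ENNReal.ofReal κ :=
    ENNReal.lt_add_right hfin (by simp [ENNReal.ofReal_eq_zero, not_le, hκ0])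
  obtain ⟨O, hOsub, hOopen, hOlt⟩ := Set.exists_isOpen_lt_of_lt _ _ hlt
  have hcov' : ∀ x ∈ Icc a b, x ∈ W ∨ x ∈ closure E ∨ x ∈ O := by
    intro x hx
    rcases hcov x hx with h|h|h
    · exact Or.inl h
    · exact Or.inr (Or.inl (subset_closure h))
    · exact Or.inr (Or.inr (hOsub ⟨h, hx⟩))
  have hmain : |f b - f a| ≤ L * Vol O a b := lipAc hf hW hWc hC hC0 hOopen hab hcov'
  have hOv : Vol O a b ≤ (volume (T ∩ Icc a b)).toReal + κ := by
    have h1 : volume (O ∩ Icc a b) ≤ volume (T ∩ Icc a b) + ENNReal.ofReal κ :=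
      le_trans (measure_mono inter_subset_left) hOlt.le
    calc Vol O a b ≤ (volume (T ∩ Icc a b) + ENNReal.ofReal κ).toReal :=
          ENNReal.toReal_mono (by simp [hfin, ENNReal.add_ne_top]) h1
      _ = (volume (T ∩ Icc a b)).toReal + κ := by
          rw [ENNReal.toReal_add hfin ENNReal.ofReal_ne_top,
            ENNReal.toReal_ofReal hκ0.le]
  have hLκ : (L:ℝ) * κ ≤ ε := by
    have hL1 : (0:ℝ) < (L:ℝ) + 1 := by positivity
    rw [hκ, mul_comm, div_mul_eq_mul_div, div_le_iff₀ hL1]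
    nlinarith [L.2, hε.le]
  calc |f b - f a| ≤ L * ((volume (T ∩ Icc a b)).toReal + κ) :=
        le_trans hmain (mul_le_mul_of_nonneg_left hOv L.2)
    _ = L * (volume (T ∩ Icc a b)).toReal + L * κ := by ring
    _ ≤ L * (volume (T ∩ Icc a b)).toReal + ε := by linarith

end LipA


section Gam
variable {X : Type*} [MetricSpace X]

/-- The clamped reparametrization of the curve, defined on all of `ℝ`. -/
def gam (γ : Curve X) : ℝ → X := fun r => γ.toFun (min (max r 0) γ.len)

lemma clamp_mem (γ : Curve X) (r : ℝ) : min (max r 0) γ.len ∈ Icc (0:ℝ) γ.len :=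
  ⟨le_min (le_max_right _ _) γ.len_pos.le, min_le_right _ _⟩

lemma gam_lip (γ : Curve X) : LipschitzWith 1 (gam γ) := by
  have hclamp : LipschitzWith 1 (fun r : ℝ => min (max r 0) γ.len) :=
    (LipschitzWith.id.max_const 0).min_const γ.len
  refine LipschitzWith.of_dist_le_mul fun x y => ?_
  calc dist (gam γ x) (gam γ y)
      ≤ 1 * dist (min (max x 0) γ.len) (min (max y 0) γ.len) := by
        have := γ.lip.dist_le_mul _ (clamp_mem γ x) _ (clamp_mem γ y)
        simpa [gam] using this
    _ ≤ 1 * dist x y := by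
        have := hclamp.dist_le_mul x y
        simpa using this

lemma gam_eq (γ : Curve X) {r : ℝ} (hr : r ∈ Icc (0:ℝ) γ.len) : gam γ r = γ.toFun r := by
  simp [gam, max_eq_left hr.1, min_eq_left hr.2]

lemma gam_cont (γ : Curve X) : Continuous (gam γ) := (gam_lip γ).continuous

variable [MeasurableSpace X] [BorelSpace X]

lemma gam_meas (γ : Curve X) : Measurable (gam γ) := (gam_cont γ).measurable

end Gam




section Main
variable {X : Type*} [MetricSpace X] [MeasurableSpace X] [BorelSpace X]
variable {V : Type*} [NormedAddCommGroup V] [NormedSpace ℝ V]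
variable {u : X → V} {ρ : ℕ → X → ℝ≥0∞} {η : X → ℝ} {L : ℝ≥0} {U V₀ : Set X}
variable {γ : Curve X} {N : Set ℝ}

/-- auxiliary superadditivity of set-lintegrals over split intervals -/
lemma setLIntegral_Icc_superadd (g : ℝ → ℝ≥0∞) {T : Set ℝ} (hT : MeasurableSet T)
    {a x₀ b : ℝ} (h1 : a ≤ x₀) (h2 : x₀ ≤ b) :
    (∫⁻ r in T ∩ Icc a x₀, g r) + (∫⁻ r in T ∩ Icc x₀ b, g r) ≤ ∫⁻ r in T ∩ Icc a b, g r := by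
  have hae : (T ∩ Icc x₀ b : Set ℝ) =ᵐ[volume] (T ∩ Ioc x₀ b : Set ℝ) := by
    refine Filter.EventuallyEq.inter (ae_eq_refl _) (Ioc_ae_eq_Icc).symm
  rw [setLIntegral_congr hae]
  rw [← lintegral_union (hT.inter measurableSet_Ioc)
    (disjoint_left.2 fun r hr hr' => absurd hr.2.2 (not_le.2 hr'.2.1))]
  refine lintegral_mono_set ?_
  rintro r (⟨h1',h2'⟩|⟨h1',h2'⟩)
  · exact ⟨h1', h2'.1, le_trans h2'.2 h2⟩
  · exact ⟨h1', le_trans h1 h2'.1.le, h2'.2⟩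

/-- The per-piece estimate. -/
lemma piece
    (humeas : Measurable fun x => (‖u x‖₊ : ℝ≥0∞))
    (hρm : ∀ i, Measurable (ρ i))
    (hη : LipschitzWith L η) (hη0 : ∀ x, 0 ≤ η x)
    (hUmeas : MeasurableSet U) (hsupp : ∀ x ∉ U, η x = 0)
    (hV₀ : IsOpen V₀) (hconst : ∃ c : ℝ, ∀ x ∈ V₀, η x = c)
    (hN : volume N = 0)
    (hP : ∀ s t : ℝ, s ∈ Icc (0:ℝ) γ.len → t ∈ Icc (0:ℝ) γ.len → s ∉ N → t ∉ N → s < t →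
        edist (u (gam γ s)) (u (gam γ t)) ≤
          atTop.liminf fun i => ∫⁻ r in Icc s t, ρ i (gam γ r))
    {a b : ℝ} (ha : a ∈ Icc (0:ℝ) γ.len) (hb : b ∈ Icc (0:ℝ) γ.len)
    (haN : a ∉ N) (hbN : b ∉ N) (hab : a < b) :
    edist (η (gam γ a) • u (gam γ a)) (η (gam γ b) • u (gam γ b)) ≤
      (atTop.liminf fun i => ∫⁻ r in Icc a b, ENNReal.ofReal (η (gam γ r)) * ρ i (gam γ r))
      + (L : ℝ≥0∞) * (∫⁻ r in (gam γ ⁻¹' (U \ V₀)) ∩ Icc a b, (‖u (gam γ r)‖₊ : ℝ≥0∞))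
      + (L : ℝ≥0∞) * ENNReal.ofReal (b - a) *
          (atTop.liminf fun i => ∫⁻ r in Icc a b, ρ i (gam γ r)) := by
  obtain ⟨c, hc⟩ := hconst
  have hmρ : ∀ i, Measurable fun r => ρ i (gam γ r) := fun i => (hρm i).comp (gam_meas γ)
  set f : ℝ → ℝ := fun r => η (gam γ r) with hf
  have hflip : LipschitzWith L f := by
    have := hη.comp (gam_lip γ)
    simpa [Function.comp_def] using this
  have hfcont : Continuous f := hflip.continuous
  -- min point
  obtain ⟨rs, hrsmem, hrsmin⟩ := isCompact_Icc.exists_isMinOn (Set.nonempty_Icc.2 hab.le)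
    hfcont.continuousOn
  set m := f rs with hm
  have hm0 : 0 ≤ m := hη0 _
  have hmle : ∀ r ∈ Icc a b, m ≤ f r := fun r hr => hrsmin hr
  set D := atTop.liminf fun i => ∫⁻ r in Icc a b, ρ i (gam γ r) with hD
  -- interval inclusion facts
  have hsubab : Icc a b ⊆ Icc (0:ℝ) γ.len := Icc_subset_Icc ha.1 hb.2
  -- sets for lipA
  set W : Set ℝ := gam γ ⁻¹' V₀ with hW
  set T : Set ℝ := gam γ ⁻¹' (U \ V₀) with hT
  have hWopen : IsOpen W := hV₀.preimage (gam_cont γ)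
  have hTmeas : MeasurableSet T := (gam_meas γ) (hUmeas.diff hV₀.measurableSet)
  have hWc : ∀ x ∈ W, f x = c := fun x hx => hc _ hx
  have hEc : ∀ x ∈ (gam γ ⁻¹' Uᶜ), f x = 0 := fun x hx => hsupp _ hx
  have hcov : ∀ x : ℝ, x ∈ W ∨ x ∈ (gam γ ⁻¹' Uᶜ) ∨ x ∈ T := by
    intro x
    by_cases h1 : gam γ x ∈ V₀
    · exact Or.inl h1
    by_cases h2 : gam γ x ∈ U
    · exact Or.inr (Or.inr ⟨h2, h1⟩)
    · exact Or.inr (Or.inl h2)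
  -- lipA applications
  have hfa : f a - m ≤ (L:ℝ) * (volume (T ∩ Icc a rs)).toReal := by
    have := lipA hflip hWopen hWc hEc hTmeas hrsmem.1 (fun x _ => hcov x)
    calc f a - m ≤ |f rs - f a| := by rw [abs_sub_comm]; exact le_abs_self _
      _ ≤ _ := this
  have hfb : f b - m ≤ (L:ℝ) * (volume (T ∩ Icc rs b)).toReal := by
    have := lipA hflip hWopen hWc hEc hTmeas hrsmem.2 (fun x _ => hcov x)
    calc f b - m ≤ |f b - f rs| := le_abs_self _
      _ ≤ _ := this
  -- basic nonneg
  have hfam : 0 ≤ f a - m := sub_nonneg.2 (hmle a ⟨le_rfl, hab.le⟩)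
  have hfbm : 0 ≤ f b - m := sub_nonneg.2 (hmle b ⟨hab.le, le_rfl⟩)
  -- step 3 : vector estimate
  set ua := u (gam γ a) with hua
  set ub := u (gam γ b) with hub
  have hkey : f a • ua - f b • ub = m • (ua - ub) + ((f a - m) • ua - (f b - m) • ub) := by
    module
  have hnorm : ‖f a • ua - f b • ub‖ ≤ m * ‖ua - ub‖ + ((f a - m) * ‖ua‖ + (f b - m) * ‖ub‖) := by
    rw [hkey]
    refine le_trans (norm_add_le _ _) ?_
    refine add_le_add ?_ (le_trans (norm_sub_le _ _) ?_)
    · rw [norm_smul, Real.norm_eq_abs, abs_of_nonneg hm0]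
    · refine add_le_add ?_ ?_ <;>
        rw [norm_smul, Real.norm_eq_abs]
      · rw [abs_of_nonneg hfam]
      · rw [abs_of_nonneg hfbm]
  have hsplit : edist (f a • ua) (f b • ub) ≤
      ENNReal.ofReal (m * ‖ua - ub‖) + ENNReal.ofReal ((f a - m) * ‖ua‖)
      + ENNReal.ofReal ((f b - m) * ‖ub‖) := by
    rw [edist_eq_coe_nnnorm_sub, ← ofReal_norm_eq_coe_nnnorm]
    calc ENNReal.ofReal ‖f a • ua - f b • ub‖
        ≤ ENNReal.ofReal (m * ‖ua - ub‖ + ((f a - m) * ‖ua‖ + (f b - m) * ‖ub‖)) :=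
          ENNReal.ofReal_le_ofReal hnorm
      _ ≤ _ := by
          refine le_trans (ENNReal.ofReal_add_le) ?_
          rw [add_assoc]
          exact add_le_add_right (ENNReal.ofReal_add_le) _
  -- liminf monotone in intervals
  have hDmono : ∀ {α β : ℝ}, Icc α β ⊆ Icc a b →
      (atTop.liminf fun i => ∫⁻ r in Icc α β, ρ i (gam γ r)) ≤ D :=
    fun h => liminf_le_liminf (Eventually.of_forall fun i => lintegral_mono_set h)
  -- Term 1
  have hedistab : edist ua ub ≤ D := hP a b ha hb haN hbN hab
  set Q := atTop.liminf fun i => ∫⁻ r in Icc a b, ENNReal.ofReal (η (gam γ r)) * ρ i (gam γ r)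
    with hQ
  have hterm1 : ENNReal.ofReal (m * ‖ua - ub‖) ≤ Q := by
    rw [ENNReal.ofReal_mul hm0, ofReal_norm_eq_coe_nnnorm, ← edist_eq_coe_nnnorm_sub]
    calc ENNReal.ofReal m * edist ua ub ≤ ENNReal.ofReal m * D := mul_le_mul_right hedistab _
      _ ≤ atTop.liminf fun i => ENNReal.ofReal m * ∫⁻ r in Icc a b, ρ i (gam γ r) :=
          const_mul_liminf_le _ _
      _ ≤ Q := by
          refine liminf_le_liminf (Filter.Eventually.of_forall fun i => ?_)
          rw [← lintegral_const_mul _ (hmρ i)]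
          refine setLIntegral_mono
            ((ENNReal.measurable_ofReal.comp hfcont.measurable).mul (hmρ i)) fun r hr => ?_
          exact mul_le_mul_left (ENNReal.ofReal_le_ofReal (hmle r hr)) _
  -- the key norm bound
  have hkey2 : ∀ (e : ℝ) (S : Set ℝ), MeasurableSet S →
      (∀ r ∈ S, r ∉ N → edist (u (gam γ e)) (u (gam γ r)) ≤ D) →
      (‖u (gam γ e)‖₊ : ℝ≥0∞) * volume S ≤
        (∫⁻ r in S, (‖u (gam γ r)‖₊ : ℝ≥0∞)) + D * volume S := by
    intro e S hSmeas hptwise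
    have h1 : ∀ᵐ r ∂(volume.restrict S), r ∉ N := by
      refine ae_restrict_of_ae ?_
      rw [ae_iff]
      simpa using hN
    have h2 : ∀ᵐ r ∂(volume.restrict S), r ∈ S := ae_restrict_mem hSmeas
    have hle : ∀ᵐ r ∂(volume.restrict S),
        (‖u (gam γ e)‖₊ : ℝ≥0∞) ≤ (‖u (gam γ r)‖₊ : ℝ≥0∞) + D := by
      filter_upwards [h1, h2] with r hrN hrS
      calc (‖u (gam γ e)‖₊ : ℝ≥0∞) = edist (u (gam γ e)) 0 := (edist_eq_coe_nnnorm _).symm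
        _ ≤ edist (u (gam γ e)) (u (gam γ r)) + edist (u (gam γ r)) 0 := edist_triangle _ _ _
        _ ≤ D + (‖u (gam γ r)‖₊ : ℝ≥0∞) :=
            add_le_add (hptwise r hrS hrN) (le_of_eq (edist_eq_coe_nnnorm _))
        _ = (‖u (gam γ r)‖₊ : ℝ≥0∞) + D := add_comm _ _
    calc (‖u (gam γ e)‖₊ : ℝ≥0∞) * volume S = ∫⁻ _ in S, (‖u (gam γ e)‖₊ : ℝ≥0∞) :=
          (setLIntegral_const _ _).symm
      _ ≤ ∫⁻ r in S, ((‖u (gam γ r)‖₊ : ℝ≥0∞) + D) := lintegral_mono_ae hle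
      _ = _ := by
          rw [lintegral_add_right _ measurable_const, setLIntegral_const]
  -- Terms 2 and 3
  have hfinvol : ∀ (α β : ℝ), volume (T ∩ Icc α β) ≠ ∞ := fun α β =>
    ne_top_of_le_ne_top (by simp [Real.volume_Icc]) (measure_mono inter_subset_right)
  have hedist_a : ∀ r ∈ T ∩ Icc a rs, r ∉ N → edist (u (gam γ a)) (u (gam γ r)) ≤ D := by
    intro r hr hrN
    rcases eq_or_lt_of_le hr.2.1 with heq|hlt'
    · rw [← heq]; simp
    · refine le_trans (hP a r ha (hsubab ⟨hr.2.1, le_trans hr.2.2 hrsmem.2⟩) haN hrN hlt')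
        (hDmono (Icc_subset_Icc le_rfl (le_trans hr.2.2 hrsmem.2)))
  have hedist_b : ∀ r ∈ T ∩ Icc rs b, r ∉ N → edist (u (gam γ b)) (u (gam γ r)) ≤ D := by
    intro r hr hrN
    rcases eq_or_lt_of_le hr.2.2 with heq|hlt'
    · rw [heq]; simp
    · rw [edist_comm]
      refine le_trans (hP r b (hsubab ⟨le_trans hrsmem.1 hr.2.1, hr.2.2⟩) hb hrN hbN hlt')
        (hDmono (Icc_subset_Icc (le_trans hrsmem.1 hr.2.1) le_rfl))
  have hSmeas1 : MeasurableSet (T ∩ Icc a rs) := hTmeas.inter measurableSet_Icc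
  have hSmeas2 : MeasurableSet (T ∩ Icc rs b) := hTmeas.inter measurableSet_Icc
  have hcoe : ∀ (α β : ℝ), ENNReal.ofReal ((L:ℝ) * (volume (T ∩ Icc α β)).toReal)
      = (L : ℝ≥0∞) * volume (T ∩ Icc α β) := by
    intro α β
    rw [ENNReal.ofReal_mul L.coe_nonneg, ENNReal.ofReal_coe_nnreal, ENNReal.ofReal_toReal (hfinvol α β)]
  have hterm2 : ENNReal.ofReal ((f a - m) * ‖ua‖) ≤
      (L:ℝ≥0∞) * ((∫⁻ r in T ∩ Icc a rs, (‖u (gam γ r)‖₊:ℝ≥0∞)) + D * volume (T ∩ Icc a rs)) := by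
    rw [ENNReal.ofReal_mul hfam, ofReal_norm_eq_coe_nnnorm]
    have h1 : ENNReal.ofReal (f a - m) ≤ (L:ℝ≥0∞) * volume (T ∩ Icc a rs) :=
      le_trans (ENNReal.ofReal_le_ofReal hfa) (le_of_eq (hcoe a rs))
    calc ENNReal.ofReal (f a - m) * (‖ua‖₊ : ℝ≥0∞)
        ≤ ((L:ℝ≥0∞) * volume (T ∩ Icc a rs)) * (‖ua‖₊ : ℝ≥0∞) := mul_le_mul_left h1 _
      _ = (L:ℝ≥0∞) * ((‖ua‖₊ : ℝ≥0∞) * volume (T ∩ Icc a rs)) := by ring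
      _ ≤ _ := mul_le_mul_right (hkey2 a _ hSmeas1 hedist_a) _
  have hterm3 : ENNReal.ofReal ((f b - m) * ‖ub‖) ≤
      (L:ℝ≥0∞) * ((∫⁻ r in T ∩ Icc rs b, (‖u (gam γ r)‖₊:ℝ≥0∞)) + D * volume (T ∩ Icc rs b)) := by
    rw [ENNReal.ofReal_mul hfbm, ofReal_norm_eq_coe_nnnorm]
    have h1 : ENNReal.ofReal (f b - m) ≤ (L:ℝ≥0∞) * volume (T ∩ Icc rs b) :=
      le_trans (ENNReal.ofReal_le_ofReal hfb) (le_of_eq (hcoe rs b))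
    calc ENNReal.ofReal (f b - m) * (‖ub‖₊ : ℝ≥0∞)
        ≤ ((L:ℝ≥0∞) * volume (T ∩ Icc rs b)) * (‖ub‖₊ : ℝ≥0∞) := mul_le_mul_left h1 _
      _ = (L:ℝ≥0∞) * ((‖ub‖₊ : ℝ≥0∞) * volume (T ∩ Icc rs b)) := by ring
      _ ≤ _ := mul_le_mul_right (hkey2 b _ hSmeas2 hedist_b) _
  -- combine
  have hvolsum : volume (T ∩ Icc a rs) + volume (T ∩ Icc rs b) ≤ ENNReal.ofReal (b - a) := by
    calc volume (T ∩ Icc a rs) + volume (T ∩ Icc rs b)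
        ≤ volume (Icc a rs) + volume (Icc rs b) :=
          add_le_add (measure_mono inter_subset_right) (measure_mono inter_subset_right)
      _ = ENNReal.ofReal (rs - a) + ENNReal.ofReal (b - rs) := by
          rw [Real.volume_Icc, Real.volume_Icc]
      _ = ENNReal.ofReal (b - a) := by
          rw [← ENNReal.ofReal_add (sub_nonneg.2 hrsmem.1) (sub_nonneg.2 hrsmem.2)]
          ring_nf
  have hintsum : (∫⁻ r in T ∩ Icc a rs, (‖u (gam γ r)‖₊:ℝ≥0∞))
      + (∫⁻ r in T ∩ Icc rs b, (‖u (gam γ r)‖₊:ℝ≥0∞))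
      ≤ ∫⁻ r in T ∩ Icc a b, (‖u (gam γ r)‖₊:ℝ≥0∞) :=
    setLIntegral_Icc_superadd _ hTmeas hrsmem.1 hrsmem.2
  refine le_trans hsplit ?_
  refine le_trans (add_le_add (add_le_add hterm1 hterm2) hterm3) ?_
  have hAB : (L:ℝ≥0∞) * ((∫⁻ r in T ∩ Icc a rs, (‖u (gam γ r)‖₊:ℝ≥0∞)) + D * volume (T ∩ Icc a rs))
      + (L:ℝ≥0∞) * ((∫⁻ r in T ∩ Icc rs b, (‖u (gam γ r)‖₊:ℝ≥0∞)) + D * volume (T ∩ Icc rs b))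
      ≤ (L:ℝ≥0∞) * (∫⁻ r in T ∩ Icc a b, (‖u (gam γ r)‖₊:ℝ≥0∞))
        + (L:ℝ≥0∞) * ENNReal.ofReal (b - a) * D := by
    have heq1 : (L:ℝ≥0∞) * ((∫⁻ r in T ∩ Icc a rs, (‖u (gam γ r)‖₊:ℝ≥0∞)) + D * volume (T ∩ Icc a rs))
        + (L:ℝ≥0∞) * ((∫⁻ r in T ∩ Icc rs b, (‖u (gam γ r)‖₊:ℝ≥0∞)) + D * volume (T ∩ Icc rs b))
        = (L:ℝ≥0∞) * ((∫⁻ r in T ∩ Icc a rs, (‖u (gam γ r)‖₊:ℝ≥0∞))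
            + (∫⁻ r in T ∩ Icc rs b, (‖u (gam γ r)‖₊:ℝ≥0∞)))
          + (L:ℝ≥0∞) * D * (volume (T ∩ Icc a rs) + volume (T ∩ Icc rs b)) := by ring
    rw [heq1]
    refine add_le_add (mul_le_mul_right hintsum _) ?_
    calc (L:ℝ≥0∞) * D * (volume (T ∩ Icc a rs) + volume (T ∩ Icc rs b))
        ≤ (L:ℝ≥0∞) * D * ENNReal.ofReal (b - a) := mul_le_mul_right hvolsum _
      _ = (L:ℝ≥0∞) * ENNReal.ofReal (b - a) * D := by ring
  rw [add_assoc, add_assoc]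
  exact add_le_add_right hAB _

end Main

section Part5

lemma sum_setLIntegral_le (g : ℝ → ℝ≥0∞) (T : ℕ → ℝ) (hmono : ∀ j, T j ≤ T (j+1)) (n : ℕ) :
    ∑ j ∈ Finset.range n, ∫⁻ r in Icc (T j) (T (j+1)), g r ≤ ∫⁻ r in Icc (T 0) (T n), g r := by
  have hchain : Monotone T := monotone_nat_of_le_succ hmono
  have hIoc : ∀ (c d : ℝ), (∫⁻ r in Icc c d, g r) = ∫⁻ r in Ioc c d, g r :=
    fun c d => (setLIntegral_congr (Ioc_ae_eq_Icc (α := ℝ) (μ := volume))).symm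
  have key : ∀ n, ∑ j ∈ Finset.range n, ∫⁻ r in Ioc (T j) (T (j+1)), g r
      = ∫⁻ r in Ioc (T 0) (T n), g r := by
    intro n
    induction n with
    | zero => simp
    | succ n ih =>
        rw [Finset.sum_range_succ, ih, ← lintegral_union measurableSet_Ioc
          (Set.Ioc_disjoint_Ioc_of_le le_rfl), Set.Ioc_union_Ioc_eq_Ioc (hchain (Nat.zero_le n))
          (hmono n)]
  calc ∑ j ∈ Finset.range n, ∫⁻ r in Icc (T j) (T (j+1)), g r
      = ∑ j ∈ Finset.range n, ∫⁻ r in Ioc (T j) (T (j+1)), g r := by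
        refine Finset.sum_congr rfl fun j _ => hIoc _ _
    _ = ∫⁻ r in Ioc (T 0) (T n), g r := key n
    _ ≤ ∫⁻ r in Icc (T 0) (T n), g r := lintegral_mono_set Ioc_subset_Icc_self

lemma setLIntegral_inter_eq (g : ℝ → ℝ≥0∞) {S : Set ℝ} (A : Set ℝ) (hS : MeasurableSet S) :
    ∫⁻ r in S ∩ A, g r = ∫⁻ r in A, S.indicator g r := by
  rw [lintegral_indicator hS, Measure.restrict_restrict hS]

lemma exists_partition {N : Set ℝ} (hN : volume N = 0) {a b δ : ℝ} (haN : a ∉ N) (hbN : b ∉ N)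
    (hab : a < b) (hδ : 0 < δ) :
    ∃ (n : ℕ) (T : ℕ → ℝ), 0 < n ∧ T 0 = a ∧ T n = b ∧
      (∀ j, T j ≤ T (j+1)) ∧ (∀ j, j < n → T j < T (j+1) ∧ T (j+1) - T j ≤ δ) ∧
      (∀ j, T j ∈ Icc a b ∧ T j ∉ N) := by
  set n : ℕ := max 1 ⌈3 * (b - a) / (2 * δ)⌉₊ with hn
  have hn1 : 1 ≤ n := le_max_left _ _
  have hn0 : (0:ℝ) < n := by positivity
  set h : ℝ := (b - a) / n with hh
  have hh0 : 0 < h := div_pos (by linarith) hn0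
  have hnh : a + n * h = b := by rw [hh, mul_div_assoc', mul_div_cancel_left₀ _ hn0.ne']; ring
  have hhδ : 3 * h ≤ 2 * δ := by
    have h1 : 3 * (b - a) / (2 * δ) ≤ (n:ℝ) :=
      le_trans (Nat.le_ceil _) (by exact_mod_cast le_max_right 1 ⌈3 * (b - a) / (2 * δ)⌉₊)
    rw [div_le_iff₀ (by positivity)] at h1
    have h2 : 3 * h = 3 * (b - a) / n := by rw [hh]; ring
    rw [h2, div_le_iff₀ hn0]
    linarith
  have hpick : ∀ j : ℕ, 0 < j → j < n → ∃ x, x ∈ Ioo (a + j * h) (a + j * h + h/2) ∧ x ∉ N := by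
    intro j _ _
    by_contra hcon
    push_neg at hcon
    have hsub : Ioo (a + j*h) (a + j*h + h/2) ⊆ N := fun x hx => hcon x hx
    have hle : volume (Ioo (a + j*h) (a + j*h + h/2)) ≤ volume N := measure_mono hsub
    rw [hN, Real.volume_Ioo] at hle
    have h0 : ENNReal.ofReal (a + ↑j * h + h / 2 - (a + ↑j * h)) = 0 :=
      le_antisymm hle (zero_le)
    rw [ENNReal.ofReal_eq_zero] at h0
    linarith
  set T : ℕ → ℝ := fun j =>
    if hj0 : j = 0 then a else if hjn : n ≤ j then b
    else Classical.choose (hpick j (Nat.pos_of_ne_zero hj0) (lt_of_not_ge hjn)) with hTdef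
  have hT0 : T 0 = a := by simp [hTdef]
  have hTn : ∀ j, n ≤ j → T j = b := by
    intro j hj
    have hj0 : j ≠ 0 := by omega
    simp only [hTdef]
    rw [dif_neg hj0, dif_pos hj]
  have hTmid : ∀ j, 0 < j → j < n → T j ∈ Ioo (a + j*h) (a + j*h + h/2) ∧ T j ∉ N := by
    intro j hj0 hjn
    have hj0' : j ≠ 0 := by omega
    have hjn' : ¬ n ≤ j := by omega
    simp only [hTdef]
    rw [dif_neg hj0', dif_neg hjn']
    exact Classical.choose_spec (hpick j hj0 hjn)
  -- cast facts
  have hcast : ∀ j : ℕ, j < n → (j:ℝ) + 1 ≤ (n:ℝ) := by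
    intro j hj; exact_mod_cast Nat.succ_le_of_lt hj
  have main : ∀ j, j < n → T j < T (j+1) ∧ T (j+1) - T j ≤ δ := by
    intro j hj
    rcases Nat.eq_zero_or_pos j with rfl|hjpos
    · rcases eq_or_lt_of_le (Nat.succ_le_of_lt hj) with h1|h1
      · -- j+1 = n
        rw [hT0, hTn 1 (le_of_eq h1.symm)]
        constructor
        · exact hab
        · have : (n:ℝ) = 1 := by exact_mod_cast h1.symm
          rw [this, one_mul] at hnh
          linarith
      · -- 1 < n
        obtain ⟨hIoo, _⟩ := hTmid 1 Nat.one_pos h1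
        rw [hT0]
        push_cast at hIoo
        constructor
        · have := hIoo.1; linarith
        · have := hIoo.2; linarith
    · obtain ⟨hIooj, _⟩ := hTmid j hjpos hj
      rcases eq_or_lt_of_le (Nat.succ_le_of_lt hj) with h1|h1
      · -- j+1 = n
        rw [hTn (j+1) (le_of_eq h1.symm)]
        have hnj : (n:ℝ) = (j:ℝ) + 1 := by exact_mod_cast h1.symm
        constructor
        · have := hIooj.2
          have hb' : a + (j:ℝ) * h + h ≤ b := by rw [← hnh, hnj]; ring_nf; linarith [le_refl (a + ((j:ℝ)+1)*h)]
          linarith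
        · have := hIooj.1
          have hb' : b = a + ((j:ℝ) + 1) * h := by rw [← hnh, hnj]
          rw [hb']
          linarith
      · obtain ⟨hIooj1, _⟩ := hTmid (j+1) (Nat.succ_pos j) h1
        push_cast at hIooj1
        constructor
        · have h2 := hIooj.2
          have h3 := hIooj1.1
          linarith
        · have h2 := hIooj.1
          have h3 := hIooj1.2
          linarith
  have hmem : ∀ j, T j ∈ Icc a b ∧ T j ∉ N := by
    intro j
    rcases Nat.eq_zero_or_pos j with rfl|hjpos
    · rw [hT0]; exact ⟨⟨le_rfl, hab.le⟩, haN⟩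
    rcases lt_or_ge j n with hjn|hjn
    · obtain ⟨hIoo, hNj⟩ := hTmid j hjpos hjn
      have hjr : (1:ℝ) ≤ (j:ℝ) := by exact_mod_cast hjpos
      have hjn' := hcast j hjn
      refine ⟨⟨?_, ?_⟩, hNj⟩
      · have := hIoo.1; nlinarith
      · have := hIoo.2
        have : T j < a + (j:ℝ) * h + h / 2 := this
        have hle : a + (j:ℝ) * h + h/2 ≤ a + (n:ℝ) * h := by nlinarith
        linarith [hnh]
    · rw [hTn j hjn]; exact ⟨⟨hab.le, le_rfl⟩, hbN⟩
  refine ⟨n, T, by omega, hT0, hTn n le_rfl, ?_, main, hmem⟩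
  intro j
  rcases lt_or_ge j n with hjn|hjn
  · exact (main j hjn).1.le
  · rw [hTn j hjn, hTn (j+1) (by omega)]

end Part5

section Case1
variable {X : Type*} [MetricSpace X] [MeasurableSpace X] [BorelSpace X]
variable {V : Type*} [NormedAddCommGroup V] [NormedSpace ℝ V]
variable {u : X → V} {ρ : ℕ → X → ℝ≥0∞} {η : X → ℝ} {L : ℝ≥0} {U V₀ : Set X}
variable {γ : Curve X} {N : Set ℝ}

/-- Case 1: the estimate over an interval with finite `ρ`-liminf. -/
lemma case1
    (humeas : Measurable fun x => (‖u x‖₊ : ℝ≥0∞))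
    (hρm : ∀ i, Measurable (ρ i))
    (hη : LipschitzWith L η) (hη0 : ∀ x, 0 ≤ η x)
    (hUmeas : MeasurableSet U) (hsupp : ∀ x ∉ U, η x = 0)
    (hV₀ : IsOpen V₀) (hconst : ∃ c : ℝ, ∀ x ∈ V₀, η x = c)
    (hN : volume N = 0)
    (hP : ∀ s t : ℝ, s ∈ Icc (0:ℝ) γ.len → t ∈ Icc (0:ℝ) γ.len → s ∉ N → t ∉ N → s < t →
        edist (u (gam γ s)) (u (gam γ t)) ≤
          atTop.liminf fun i => ∫⁻ r in Icc s t, ρ i (gam γ r))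
    {a b : ℝ} (ha : a ∈ Icc (0:ℝ) γ.len) (hb : b ∈ Icc (0:ℝ) γ.len)
    (haN : a ∉ N) (hbN : b ∉ N) (hab : a < b)
    (hDfin : (atTop.liminf fun i => ∫⁻ r in Icc a b, ρ i (gam γ r)) ≠ ∞) :
    edist (η (gam γ a) • u (gam γ a)) (η (gam γ b) • u (gam γ b)) ≤
      (atTop.liminf fun i => ∫⁻ r in Icc a b, ENNReal.ofReal (η (gam γ r)) * ρ i (gam γ r))
      + (L : ℝ≥0∞) * (∫⁻ r in (gam γ ⁻¹' (U \ V₀)) ∩ Icc a b, (‖u (gam γ r)‖₊ : ℝ≥0∞)) := by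
  set D := atTop.liminf fun i => ∫⁻ r in Icc a b, ρ i (gam γ r) with hD
  set Q := atTop.liminf fun i => ∫⁻ r in Icc a b, ENNReal.ofReal (η (gam γ r)) * ρ i (gam γ r)
    with hQ
  set Ts : Set ℝ := gam γ ⁻¹' (U \ V₀) with hTs
  have hTmeas : MeasurableSet Ts := (gam_meas γ) (hUmeas.diff hV₀.measurableSet)
  set I := ∫⁻ r in Ts ∩ Icc a b, (‖u (gam γ r)‖₊ : ℝ≥0∞) with hI
  refine ENNReal.le_of_forall_pos_le_add fun ε hε _ => ?_
  -- choose δ with L * ofReal δ * D ≤ ε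
  obtain ⟨δ, hδpos, hδ⟩ : ∃ δ : ℝ, 0 < δ ∧ (L:ℝ≥0∞) * ENNReal.ofReal δ * D ≤ ε := by
    set C := (L:ℝ≥0∞) * D with hC
    have hCfin : C ≠ ∞ := ENNReal.mul_ne_top ENNReal.coe_ne_top hDfin
    rcases eq_or_ne C 0 with hC0|hC0
    · exact ⟨1, one_pos, by
        rw [show (L:ℝ≥0∞) * ENNReal.ofReal 1 * D = ENNReal.ofReal 1 * C by rw [hC]; ring, hC0,
          mul_zero]
        exact zero_le⟩
    · set q := min 1 ((ε:ℝ≥0∞) / C) with hq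
      have hq0 : q ≠ 0 := by
        simp only [hq, ne_eq, min_eq_iff, not_or]
        rw [ENNReal.div_eq_zero_iff]
        push_neg
        constructor
        · intro h; exact absurd h one_ne_zero
        · intro h
          rcases h with h|h
          · exact absurd h (by simpa using hε.ne')
          · exact absurd h hCfin
      have hqfin : q ≠ ∞ := ne_top_of_le_ne_top ENNReal.one_ne_top (min_le_left _ _)
      refine ⟨q.toReal, ENNReal.toReal_pos hq0 hqfin, ?_⟩
      have : (L:ℝ≥0∞) * ENNReal.ofReal q.toReal * D = q * C := by
        rw [ENNReal.ofReal_toReal hqfin, hC]; ring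
      rw [this]
      calc q * C ≤ ((ε:ℝ≥0∞) / C) * C := mul_le_mul_left (min_le_right _ _) _
        _ = ε := ENNReal.div_mul_cancel hC0 hCfin
  obtain ⟨n, T, hn0, hT0, hTn, hTmono, hTstep, hTmem⟩ := exists_partition hN haN hbN hab hδpos
  have hsubab : Icc a b ⊆ Icc (0:ℝ) γ.len := Icc_subset_Icc ha.1 hb.2
  -- telescoping
  have htel : edist (η (gam γ a) • u (gam γ a)) (η (gam γ b) • u (gam γ b)) ≤
      ∑ j ∈ Finset.range n, edist (η (gam γ (T j)) • u (gam γ (T j)))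
        (η (gam γ (T (j+1))) • u (gam γ (T (j+1)))) := by
    have := edist_le_range_sum_edist (fun j => η (gam γ (T j)) • u (gam γ (T j))) n
    rwa [hT0, hTn] at this
  -- apply piece on each interval
  have hpiece : ∀ j < n,
      edist (η (gam γ (T j)) • u (gam γ (T j))) (η (gam γ (T (j+1))) • u (gam γ (T (j+1)))) ≤
        (atTop.liminf fun i => ∫⁻ r in Icc (T j) (T (j+1)),
            ENNReal.ofReal (η (gam γ r)) * ρ i (gam γ r))
        + (L : ℝ≥0∞) * (∫⁻ r in Ts ∩ Icc (T j) (T (j+1)), (‖u (gam γ r)‖₊ : ℝ≥0∞))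
        + (L : ℝ≥0∞) * ENNReal.ofReal δ *
            (atTop.liminf fun i => ∫⁻ r in Icc (T j) (T (j+1)), ρ i (gam γ r)) := by
    intro j hj
    refine le_trans (piece humeas hρm hη hη0 hUmeas hsupp hV₀ hconst hN hP
      (hsubab (hTmem j).1) (hsubab (hTmem (j+1)).1) (hTmem j).2 (hTmem (j+1)).2
      (hTstep j hj).1) ?_
    refine add_le_add_right ?_ _
    exact mul_le_mul_left (mul_le_mul_right
      (ENNReal.ofReal_le_ofReal (hTstep j hj).2) _) _
  -- sum up
  have hsum1 : ∑ j ∈ Finset.range n, (atTop.liminf fun i => ∫⁻ r in Icc (T j) (T (j+1)),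
      ENNReal.ofReal (η (gam γ r)) * ρ i (gam γ r)) ≤ Q := by
    refine le_trans (sum_liminf_le n _) (liminf_le_liminf (Eventually.of_forall fun i => ?_))
    have := sum_setLIntegral_le (fun r => ENNReal.ofReal (η (gam γ r)) * ρ i (gam γ r)) T
      hTmono n
    rwa [hT0, hTn] at this
  have hsum2 : ∑ j ∈ Finset.range n,
      (L : ℝ≥0∞) * (∫⁻ r in Ts ∩ Icc (T j) (T (j+1)), (‖u (gam γ r)‖₊ : ℝ≥0∞)) ≤
      (L : ℝ≥0∞) * I := by
    rw [← Finset.mul_sum]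
    refine mul_le_mul_right ?_ _
    have hconv : ∀ (c d : ℝ), (∫⁻ r in Ts ∩ Icc c d, (‖u (gam γ r)‖₊ : ℝ≥0∞))
        = ∫⁻ r in Icc c d, Ts.indicator (fun r => (‖u (gam γ r)‖₊ : ℝ≥0∞)) r := fun c d =>
      setLIntegral_inter_eq _ _ hTmeas
    calc ∑ j ∈ Finset.range n, ∫⁻ r in Ts ∩ Icc (T j) (T (j+1)), (‖u (gam γ r)‖₊ : ℝ≥0∞)
        = ∑ j ∈ Finset.range n, ∫⁻ r in Icc (T j) (T (j+1)),
            Ts.indicator (fun r => (‖u (gam γ r)‖₊ : ℝ≥0∞)) r := by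
          exact Finset.sum_congr rfl fun j _ => hconv _ _
      _ ≤ ∫⁻ r in Icc (T 0) (T n), Ts.indicator (fun r => (‖u (gam γ r)‖₊ : ℝ≥0∞)) r :=
          sum_setLIntegral_le _ T hTmono n
      _ = I := by rw [hT0, hTn, hI, hconv]
  have hsum3 : ∑ j ∈ Finset.range n, (L : ℝ≥0∞) * ENNReal.ofReal δ *
      (atTop.liminf fun i => ∫⁻ r in Icc (T j) (T (j+1)), ρ i (gam γ r)) ≤ ε := by
    rw [← Finset.mul_sum]
    refine le_trans (mul_le_mul_right ?_ _) hδ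
    refine le_trans (sum_liminf_le n _) (liminf_le_liminf (Eventually.of_forall fun i => ?_))
    have := sum_setLIntegral_le (fun r => ρ i (gam γ r)) T hTmono n
    rwa [hT0, hTn] at this
  calc edist (η (gam γ a) • u (gam γ a)) (η (gam γ b) • u (gam γ b))
      ≤ ∑ j ∈ Finset.range n, edist (η (gam γ (T j)) • u (gam γ (T j)))
        (η (gam γ (T (j+1))) • u (gam γ (T (j+1)))) := htel
    _ ≤ ∑ j ∈ Finset.range n, ((atTop.liminf fun i => ∫⁻ r in Icc (T j) (T (j+1)),
            ENNReal.ofReal (η (gam γ r)) * ρ i (gam γ r))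
        + (L : ℝ≥0∞) * (∫⁻ r in Ts ∩ Icc (T j) (T (j+1)), (‖u (gam γ r)‖₊ : ℝ≥0∞))
        + (L : ℝ≥0∞) * ENNReal.ofReal δ *
            (atTop.liminf fun i => ∫⁻ r in Icc (T j) (T (j+1)), ρ i (gam γ r))) :=
          Finset.sum_le_sum fun j hj => hpiece j (Finset.mem_range.1 hj)
    _ = (∑ j ∈ Finset.range n, (atTop.liminf fun i => ∫⁻ r in Icc (T j) (T (j+1)),
            ENNReal.ofReal (η (gam γ r)) * ρ i (gam γ r)))
        + (∑ j ∈ Finset.range n,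
            (L : ℝ≥0∞) * (∫⁻ r in Ts ∩ Icc (T j) (T (j+1)), (‖u (gam γ r)‖₊ : ℝ≥0∞)))
        + (∑ j ∈ Finset.range n, (L : ℝ≥0∞) * ENNReal.ofReal δ *
            (atTop.liminf fun i => ∫⁻ r in Icc (T j) (T (j+1)), ρ i (gam γ r))) := by
          rw [← Finset.sum_add_distrib, ← Finset.sum_add_distrib]
    _ ≤ Q + (L : ℝ≥0∞) * I + ε := add_le_add (add_le_add hsum1 hsum2) hsum3

end Case1

section TG
variable {X : Type*} [MetricSpace X] [MeasurableSpace X] [BorelSpace X]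
variable {V : Type*} [NormedAddCommGroup V] [NormedSpace ℝ V]

/-- The target liminf functional. -/
def TG (u : X → V) (ρ : ℕ → X → ℝ≥0∞) (η : X → ℝ) (L : ℝ≥0) (U V₀ : Set X)
    (γ : Curve X) (s t : ℝ) : ℝ≥0∞ :=
  atTop.liminf fun i => ∫⁻ r in Icc s t,
    (ENNReal.ofReal (η (gam γ r)) * ρ i (gam γ r) +
      ((gam γ ⁻¹' (U \ V₀)).indicator (fun r => (L:ℝ≥0∞) * ‖u (gam γ r)‖₊)) r)

variable {u : X → V} {ρ : ℕ → X → ℝ≥0∞} {η : X → ℝ} {L : ℝ≥0} {U V₀ : Set X}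
variable {γ : Curve X}

lemma TG_mono {s t s' t' : ℝ} (h : Icc s' t' ⊆ Icc s t) :
    TG u ρ η L U V₀ γ s' t' ≤ TG u ρ η L U V₀ γ s t :=
  liminf_le_liminf (Eventually.of_forall fun i => lintegral_mono_set h)

lemma TG_pair {s sl tr t : ℝ} (h1 : sl < tr) (h2 : s ≤ sl) (h3 : tr ≤ t) :
    TG u ρ η L U V₀ γ s sl + TG u ρ η L U V₀ γ tr t ≤ TG u ρ η L U V₀ γ s t := by
  refine le_trans (liminf_superadd _ _) (liminf_le_liminf (Eventually.of_forall fun i => ?_))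
  rw [← lintegral_union measurableSet_Icc
    (disjoint_left.2 fun r hr hr' => absurd (lt_of_le_of_lt hr.2 h1) (not_lt.2 hr'.1))]
  refine lintegral_mono_set ?_
  rintro r (hr|hr)
  · exact ⟨hr.1, le_trans hr.2 (le_trans h1.le h3)⟩
  · exact ⟨le_trans (le_trans h2 h1.le) hr.1, hr.2⟩

end TG

section TG2
variable {X : Type*} [MetricSpace X] [MeasurableSpace X] [BorelSpace X]
variable {V : Type*} [NormedAddCommGroup V] [NormedSpace ℝ V]
variable {u : X → V} {ρ : ℕ → X → ℝ≥0∞} {η : X → ℝ} {L : ℝ≥0} {U V₀ : Set X}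
variable {γ : Curve X}

lemma edist_smul_zero' (c : ℝ) (hc : 0 ≤ c) (v : V) :
    edist (c • v) 0 = ENNReal.ofReal c * (‖v‖₊ : ℝ≥0∞) := by
  rw [edist_eq_coe_nnnorm, nnnorm_smul, ENNReal.coe_mul, ← ofReal_norm_eq_coe_nnnorm,
    Real.norm_eq_abs, abs_of_nonneg hc]

lemma rhs_lower
    (humeas : Measurable fun x => (‖u x‖₊ : ℝ≥0∞))
    (hρm : ∀ i, Measurable (ρ i))
    (hη : LipschitzWith L η)
    (hUmeas : MeasurableSet U) (hV₀ : IsOpen V₀) (s t : ℝ) :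
    (atTop.liminf fun i => ∫⁻ r in Icc s t, ENNReal.ofReal (η (gam γ r)) * ρ i (gam γ r))
      + (L : ℝ≥0∞) * (∫⁻ r in (gam γ ⁻¹' (U \ V₀)) ∩ Icc s t, (‖u (gam γ r)‖₊ : ℝ≥0∞)) ≤
    TG u ρ η L U V₀ γ s t := by
  have hTmeas : MeasurableSet (gam γ ⁻¹' (U \ V₀)) :=
    (gam_meas γ) (hUmeas.diff hV₀.measurableSet)
  have hmu : Measurable fun r => (‖u (gam γ r)‖₊ : ℝ≥0∞) := humeas.comp (gam_meas γ)
  have hBid : (L : ℝ≥0∞) * (∫⁻ r in (gam γ ⁻¹' (U \ V₀)) ∩ Icc s t, (‖u (gam γ r)‖₊ : ℝ≥0∞))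
      = ∫⁻ r in Icc s t,
          ((gam γ ⁻¹' (U \ V₀)).indicator (fun r => (L:ℝ≥0∞) * ‖u (gam γ r)‖₊)) r := by
    rw [← lintegral_const_mul _ hmu, setLIntegral_inter_eq _ _ hTmeas]
  rw [hBid]
  have hconst : (∫⁻ r in Icc s t,
      ((gam γ ⁻¹' (U \ V₀)).indicator (fun r => (L:ℝ≥0∞) * ‖u (gam γ r)‖₊)) r)
      = atTop.liminf fun _ : ℕ => (∫⁻ r in Icc s t,
        ((gam γ ⁻¹' (U \ V₀)).indicator (fun r => (L:ℝ≥0∞) * ‖u (gam γ r)‖₊)) r) :=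
    (liminf_const _).symm
  rw [hconst]
  refine le_trans (liminf_superadd _ _) (liminf_le_liminf (Eventually.of_forall fun i => ?_))
  rw [← lintegral_add_left]
  exact (ENNReal.measurable_ofReal.comp (hη.continuous.measurable.comp (gam_meas γ))).mul
    ((hρm i).comp (gam_meas γ))

end TG2

section Side
variable {X : Type*} [MetricSpace X] [MeasurableSpace X] [BorelSpace X]
variable {V : Type*} [NormedAddCommGroup V] [NormedSpace ℝ V]
variable {u : X → V} {ρ : ℕ → X → ℝ≥0∞} {η : X → ℝ} {L : ℝ≥0} {U V₀ : Set X}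
variable {γ : Curve X} {N : Set ℝ}

lemma thresh_exists (hsupp : ∀ x ∉ U, η x = 0) (hconst : ∃ c : ℝ, ∀ x ∈ V₀, η x = c)
    (hη0 : ∀ x, 0 ≤ η x) :
    ∃ th : ℝ, 0 < th ∧ ∀ x, 0 < η x → η x < th → x ∈ U \ V₀ := by
  obtain ⟨c, hc⟩ := hconst
  rcases lt_or_ge 0 c with hc0|hc0
  · refine ⟨c, hc0, fun x hx1 hx2 => ⟨?_, ?_⟩⟩
    · by_contra hU; rw [hsupp x hU] at hx1; exact lt_irrefl 0 hx1
    · intro hV; rw [hc x hV] at hx2; exact lt_irrefl c hx2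
  · refine ⟨1, one_pos, fun x hx1 _ => ⟨?_, ?_⟩⟩
    · by_contra hU; rw [hsupp x hU] at hx1; exact lt_irrefl 0 hx1
    · intro hV; rw [hc x hV] at hx1; exact absurd hx1 (not_lt.2 hc0)

/-- liminf of plain integrals is finite when `η∘γ` has positive min and TG is finite. -/
lemma Dfin_of_min_pos
    (hρm : ∀ i, Measurable (ρ i)) (hη : LipschitzWith L η) (hη0 : ∀ x, 0 ≤ η x)
    {a b : ℝ} (hab : a ≤ b)
    (hpos : ∀ r ∈ Icc a b, η (gam γ r) ≠ 0)
    (hQfin : (atTop.liminf fun i =>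
      ∫⁻ r in Icc a b, ENNReal.ofReal (η (gam γ r)) * ρ i (gam γ r)) ≠ ∞) :
    (atTop.liminf fun i => ∫⁻ r in Icc a b, ρ i (gam γ r)) ≠ ∞ := by
  have hmρ : ∀ i, Measurable fun r => ρ i (gam γ r) := fun i => (hρm i).comp (gam_meas γ)
  obtain ⟨rm, hrmmem, hrmmin⟩ := isCompact_Icc.exists_isMinOn (Set.nonempty_Icc.2 hab)
    ((hη.continuous.comp (gam_cont γ)).continuousOn)
  set m := η (gam γ rm) with hm
  have hm0 : 0 < m := lt_of_le_of_ne (hη0 _) (Ne.symm (hpos rm hrmmem))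
  intro hD
  refine hQfin ?_
  rw [eq_top_iff]
  calc (⊤ : ℝ≥0∞) = ENNReal.ofReal m * atTop.liminf fun i => ∫⁻ r in Icc a b, ρ i (gam γ r) := by
        rw [hD, ENNReal.mul_top (by simp [ENNReal.ofReal_eq_zero, not_le, hm0])]
    _ ≤ atTop.liminf fun i => ENNReal.ofReal m * ∫⁻ r in Icc a b, ρ i (gam γ r) :=
        const_mul_liminf_le _ _
    _ ≤ _ := by
        refine liminf_le_liminf (Eventually.of_forall fun i => ?_)
        rw [← lintegral_const_mul _ (hmρ i)]
        refine setLIntegral_mono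
          ((ENNReal.measurable_ofReal.comp
            ((hη.continuous.comp (gam_cont γ)).measurable)).mul (hmρ i)) fun r hr => ?_
        exact mul_le_mul_left (ENNReal.ofReal_le_ofReal (hrmmin hr)) _

lemma Q_le_TG (s t : ℝ) :
    (atTop.liminf fun i => ∫⁻ r in Icc s t, ENNReal.ofReal (η (gam γ r)) * ρ i (gam γ r))
      ≤ TG u ρ η L U V₀ γ s t :=
  liminf_le_liminf (Eventually.of_forall fun i => lintegral_mono fun r => le_self_add)

lemma G_le_TG (s t : ℝ) :
    (∫⁻ r in Icc s t, ((gam γ ⁻¹' (U \ V₀)).indicator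
        (fun r => (L:ℝ≥0∞) * ‖u (gam γ r)‖₊)) r) ≤ TG u ρ η L U V₀ γ s t := by
  have : (∫⁻ r in Icc s t, ((gam γ ⁻¹' (U \ V₀)).indicator
      (fun r => (L:ℝ≥0∞) * ‖u (gam γ r)‖₊)) r)
      = atTop.liminf fun _ : ℕ => (∫⁻ r in Icc s t, ((gam γ ⁻¹' (U \ V₀)).indicator
        (fun r => (L:ℝ≥0∞) * ‖u (gam γ r)‖₊)) r) := (liminf_const _).symm
  rw [this]
  exact liminf_le_liminf (Eventually.of_forall fun i => lintegral_mono fun r => le_add_self)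

/-- The left-side boundary estimate. -/
lemma leftEst
    (humeas : Measurable fun x => (‖u x‖₊ : ℝ≥0∞))
    (hρm : ∀ i, Measurable (ρ i))
    (hη : LipschitzWith L η) (hη0 : ∀ x, 0 ≤ η x)
    (hUmeas : MeasurableSet U) (hsupp : ∀ x ∉ U, η x = 0)
    (hV₀ : IsOpen V₀) (hconst : ∃ c : ℝ, ∀ x ∈ V₀, η x = c)
    (hN : volume N = 0)
    (hP : ∀ s t : ℝ, s ∈ Icc (0:ℝ) γ.len → t ∈ Icc (0:ℝ) γ.len → s ∉ N → t ∉ N → s < t →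
        edist (u (gam γ s)) (u (gam γ t)) ≤
          atTop.liminf fun i => ∫⁻ r in Icc s t, ρ i (gam γ r))
    {s t z₁ : ℝ} (hs : s ∈ Icc (0:ℝ) γ.len) (ht : t ∈ Icc (0:ℝ) γ.len)
    (hsN : s ∉ N) (hz₁ : z₁ ∈ Icc s t) (hsz : s < z₁)
    (hzero : η (gam γ z₁) = 0)
    (hnonzero : ∀ r, r ∈ Ico s z₁ → η (gam γ r) ≠ 0)
    (hRfin : TG u ρ η L U V₀ γ s t ≠ ∞)
    (ε : ℝ≥0) (hε : 0 < ε) :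
    ∃ sl, s < sl ∧ sl < z₁ ∧
      edist (η (gam γ s) • u (gam γ s)) 0 ≤ TG u ρ η L U V₀ γ s sl + 3 * (ε : ℝ≥0∞) := by
  obtain ⟨th, hth0, hthP⟩ := thresh_exists hsupp hconst hη0
  set Ts : Set ℝ := gam γ ⁻¹' (U \ V₀) with hTs
  have hTmeas : MeasurableSet Ts := (gam_meas γ) (hUmeas.diff hV₀.measurableSet)
  set G : ℝ → ℝ≥0∞ := Ts.indicator (fun r => (L:ℝ≥0∞) * ‖u (gam γ r)‖₊) with hG
  have hGmeas : Measurable G :=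
    (measurable_const.mul (humeas.comp (gam_meas γ))).indicator hTmeas
  set w : ℝ := min ((z₁ - s)/2) (th/(L+1)) with hw
  have hw0 : 0 < w := lt_min (by linarith) (by positivity)
  have hwz : w ≤ (z₁ - s)/2 := min_le_left _ _
  have hwth : w ≤ th/(L+1) := min_le_right _ _
  set μG := volume.withDensity G with hμG
  have hμapp : ∀ A : Set ℝ, MeasurableSet A → μG A = ∫⁻ r in A, G r := fun A hA =>
    withDensity_apply G hA
  have hμfin : μG (Icc s t) ≠ ∞ := by
    rw [hμapp _ measurableSet_Icc]
    exact ne_top_of_le_ne_top hRfin (G_le_TG s t)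
  set S : ℕ → Set ℝ := fun k => Icc (z₁ - w/(k+1)) z₁ with hS
  have hSsub : ∀ k, S k ⊆ Icc s t := by
    intro k r hr
    have h1 : w/((k:ℝ)+1) ≤ w := by
      rw [div_le_iff₀ (by positivity)]
      nlinarith [hw0.le, Nat.cast_nonneg (α := ℝ) k]
    exact ⟨le_trans (by linarith [hr.1]) le_rfl, le_trans hr.2 hz₁.2⟩
  have hInter : ⋂ k, S k = {z₁} := by
    ext r
    simp only [mem_iInter, mem_singleton_iff, hS, mem_Icc]
    constructor
    · intro hr
      have hrz : r ≤ z₁ := (hr 0).2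
      by_contra hne
      have hlt : 0 < z₁ - r := by
        rcases lt_or_eq_of_le hrz with h|h
        · linarith
        · exact absurd h hne
      obtain ⟨k, hk⟩ := exists_nat_gt (w / (z₁ - r))
      have hk1 : w / (z₁ - r) < (k:ℝ) + 1 := lt_of_lt_of_le hk (by linarith)
      rw [div_lt_iff₀ hlt] at hk1
      have := (hr k).1
      have h2 : w / ((k:ℝ)+1) < z₁ - r := by
        rw [div_lt_iff₀ (by positivity)]
        nlinarith
      linarith
    · rintro rfl
      intro k
      constructor
      · have : 0 < w/((k:ℝ)+1) := by positivity
        linarith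
      · exact le_rfl
  have hanti : Antitone S := by
    intro k k' hkk' r hr
    have h1 : (k:ℝ) + 1 ≤ (k':ℝ) + 1 := by exact_mod_cast Nat.succ_le_succ hkk'
    have h2 : w/((k':ℝ)+1) ≤ w/((k:ℝ)+1) :=
      div_le_div_of_nonneg_left hw0.le (by positivity) h1
    exact ⟨le_trans (by linarith) hr.1, hr.2⟩
  have h0 : μG {z₁} = 0 :=
    (withDensity_absolutelyContinuous volume G) Real.volume_singleton
  have htend : Tendsto (μG ∘ S) atTop (nhds 0) := by
    have htend0 := tendsto_measure_iInter_atTop (μ := μG)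
      (fun k => measurableSet_Icc.nullMeasurableSet) hanti
      ⟨0, ne_top_of_le_ne_top hμfin (measure_mono (hSsub 0))⟩
    rwa [hInter, h0] at htend0
  obtain ⟨k, hk⟩ : ∃ k, μG (S k) < (ε : ℝ≥0∞) := by
    have := (htend.eventually (eventually_lt_nhds (by
      exact_mod_cast hε : (0:ℝ≥0∞) < (ε : ℝ≥0∞)))).exists
    exact this
  set δ : ℝ := w/((k:ℝ)+1) with hδ
  have hδ0 : 0 < δ := by positivity
  have hδw : δ ≤ w := by
    rw [hδ, div_le_iff₀ (by positivity)]
    nlinarith [hw0.le, Nat.cast_nonneg (α := ℝ) k]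
  set J : Set ℝ := Icc (z₁ - δ) (z₁ - δ/2) with hJ
  have hJS : J ⊆ S k := fun r hr => ⟨hr.1, by linarith [hr.2]⟩
  have hJst : J ⊆ Icc s t := fun r hr => hSsub k (hJS hr)
  set h : ℝ → ℝ≥0∞ := fun r => ENNReal.ofReal (η (gam γ r)) * (‖u (gam γ r)‖₊ : ℝ≥0∞) with hh
  have hmeas_h : Measurable h :=
    (ENNReal.measurable_ofReal.comp ((hη.continuous.comp (gam_cont γ)).measurable)).mul
      (humeas.comp (gam_meas γ))
  have hflip : LipschitzWith L (fun r => η (gam γ r)) := by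
    have := hη.comp (gam_lip γ); simpa [Function.comp_def] using this
  have hLδth : (L:ℝ) * δ < th := by
    have h1 : (L:ℝ) * δ ≤ (L:ℝ) * (th/(L+1)) :=
      mul_le_mul_of_nonneg_left (le_trans hδw hwth) L.coe_nonneg
    have h2 : (L:ℝ) * (th/(L+1)) < th := by
      rw [mul_div_assoc']
      rw [div_lt_iff₀ (by positivity : (0:ℝ) < (L:ℝ)+1)]
      nlinarith [L.coe_nonneg]
    linarith
  have hpt : ∀ r ∈ J, h r ≤ ENNReal.ofReal δ * G r := by
    intro r hr
    rcases eq_or_lt_of_le (hη0 (gam γ r)) with heq|hpos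
    · simp [hh, ← heq]
    · have hdist : η (gam γ r) ≤ (L:ℝ) * δ := by
        have hd := hflip.dist_le_mul r z₁
        rw [Real.dist_eq, Real.dist_eq] at hd
        have habs : |r - z₁| ≤ δ := by
          rw [abs_le]; exact ⟨by linarith [hr.1], by linarith [hr.2, hδ0]⟩
        calc η (gam γ r) = η (gam γ r) - η (gam γ z₁) := by rw [hzero, sub_zero]
          _ ≤ |η (gam γ r) - η (gam γ z₁)| := le_abs_self _
          _ ≤ (L:ℝ) * |r - z₁| := hd
          _ ≤ (L:ℝ) * δ := mul_le_mul_of_nonneg_left habs L.coe_nonneg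
      have hrTs : r ∈ Ts := hthP _ hpos (lt_of_le_of_lt hdist hLδth)
      have hGr : G r = (L:ℝ≥0∞) * (‖u (gam γ r)‖₊ : ℝ≥0∞) := indicator_of_mem hrTs _
      rw [hGr, hh]
      calc ENNReal.ofReal (η (gam γ r)) * (‖u (gam γ r)‖₊ : ℝ≥0∞)
          ≤ ENNReal.ofReal ((L:ℝ) * δ) * (‖u (gam γ r)‖₊ : ℝ≥0∞) :=
            mul_le_mul_left (ENNReal.ofReal_le_ofReal hdist) _
        _ = ENNReal.ofReal δ * ((L:ℝ≥0∞) * (‖u (gam γ r)‖₊ : ℝ≥0∞)) := by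
            rw [ENNReal.ofReal_mul L.coe_nonneg, ENNReal.ofReal_coe_nnreal]
            ring
  have hintJ : ∫⁻ r in J, h r ≤ ENNReal.ofReal δ * (ε : ℝ≥0∞) := by
    calc ∫⁻ r in J, h r ≤ ∫⁻ r in J, ENNReal.ofReal δ * G r :=
          setLIntegral_mono (measurable_const.mul hGmeas) hpt
      _ = ENNReal.ofReal δ * ∫⁻ r in J, G r := lintegral_const_mul _ hGmeas
      _ = ENNReal.ofReal δ * μG J := by rw [hμapp _ measurableSet_Icc]
      _ ≤ ENNReal.ofReal δ * μG (S k) := mul_le_mul_right (measure_mono hJS) _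
      _ ≤ ENNReal.ofReal δ * (ε : ℝ≥0∞) := mul_le_mul_right hk.le _
  have hex : ∃ s', s' ∈ J ∧ s' ∉ N ∧ h s' ≤ 3 * (ε : ℝ≥0∞) := by
    by_contra hcon
    push_neg at hcon
    have hJN : volume (J \ N) = volume J := measure_diff_null hN
    have hvolJ : volume J = ENNReal.ofReal (δ/2) := by
      rw [hJ, Real.volume_Icc]; congr 1; ring
    have hlow : (3 * (ε:ℝ≥0∞)) * volume J ≤ ∫⁻ r in J, h r :=
      calc (3 * (ε:ℝ≥0∞)) * volume J = (3 * (ε:ℝ≥0∞)) * volume (J \ N) := by rw [hJN]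
        _ = ∫⁻ _ in J \ N, (3 * (ε:ℝ≥0∞)) := (setLIntegral_const _ _).symm
        _ ≤ ∫⁻ r in J \ N, h r :=
            setLIntegral_mono hmeas_h fun r hr => (hcon r hr.1 hr.2).le
        _ ≤ ∫⁻ r in J, h r := lintegral_mono_set diff_subset
    have hcontr : (3 * (ε:ℝ≥0∞)) * ENNReal.ofReal (δ/2)
        ≤ ENNReal.ofReal δ * (ε : ℝ≥0∞) := by
      rw [← hvolJ]; exact le_trans hlow hintJ
    have hδd : ENNReal.ofReal δ = 2 * ENNReal.ofReal (δ/2) := by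
      rw [← ENNReal.ofReal_ofNat, ← ENNReal.ofReal_mul (by norm_num)]
      congr 1; ring
    rw [hδd] at hcontr
    have hx0 : (ε : ℝ≥0∞) * ENNReal.ofReal (δ/2) ≠ 0 := by
      simp only [ne_eq, mul_eq_zero, not_or, ENNReal.coe_eq_zero, ENNReal.ofReal_eq_zero, not_le]
      exact ⟨hε.ne', by linarith⟩
    have hxt : (ε : ℝ≥0∞) * ENNReal.ofReal (δ/2) ≠ ∞ :=
      ENNReal.mul_ne_top ENNReal.coe_ne_top ENNReal.ofReal_ne_top
    have h32 : (3:ℝ≥0∞) ≤ 2 := by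
      refine (ENNReal.mul_le_mul_iff_left hx0 hxt).1 ?_
      calc (3:ℝ≥0∞) * ((ε : ℝ≥0∞) * ENNReal.ofReal (δ/2))
          = (3 * (ε:ℝ≥0∞)) * ENNReal.ofReal (δ/2) := by ring
        _ ≤ 2 * ENNReal.ofReal (δ/2) * (ε:ℝ≥0∞) := hcontr
        _ = 2 * ((ε : ℝ≥0∞) * ENNReal.ofReal (δ/2)) := by ring
    norm_num at h32
  obtain ⟨s', hs'J, hs'N, hs'h⟩ := hex
  have hzs2 : z₁ - w ≥ (z₁ + s)/2 := by linarith [hwz]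
  have hs's : s < s' := by
    have := hs'J.1
    have h1 : z₁ - δ ≥ z₁ - w := by linarith [hδw]
    linarith
  have hs'z : s' < z₁ := lt_of_le_of_lt hs'J.2 (by linarith)
  have hs'mem : s' ∈ Icc (0:ℝ) γ.len :=
    ⟨le_trans hs.1 hs's.le, le_trans (le_trans hs'z.le hz₁.2) ht.2⟩
  -- apply case1 on [s, s']
  have hposmin : ∀ r ∈ Icc s s', η (gam γ r) ≠ 0 := fun r hr =>
    hnonzero r ⟨hr.1, lt_of_le_of_lt hr.2 hs'z⟩
  have hQfin' : (atTop.liminf fun i =>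
      ∫⁻ r in Icc s s', ENNReal.ofReal (η (gam γ r)) * ρ i (gam γ r)) ≠ ∞ := by
    refine ne_top_of_le_ne_top hRfin (le_trans (Q_le_TG s s') (TG_mono ?_))
    exact Icc_subset_Icc le_rfl (le_trans hs'z.le hz₁.2)
  have hDfin' := Dfin_of_min_pos hρm hη hη0 hs's.le hposmin hQfin'
  have hcase := case1 humeas hρm hη hη0 hUmeas hsupp hV₀ hconst hN hP hs hs'mem hsN hs'N
    hs's hDfin'
  refine ⟨s', hs's, hs'z, ?_⟩
  calc edist (η (gam γ s) • u (gam γ s)) 0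
      ≤ edist (η (gam γ s) • u (gam γ s)) (η (gam γ s') • u (gam γ s'))
        + edist (η (gam γ s') • u (gam γ s')) 0 := edist_triangle _ _ _
    _ ≤ TG u ρ η L U V₀ γ s s' + 3 * (ε : ℝ≥0∞) := by
        refine add_le_add (le_trans hcase (rhs_lower humeas hρm hη hUmeas hV₀ s s')) ?_
        rw [edist_smul_zero' _ (hη0 _)]
        exact hs'h

/-- The right-side boundary estimate. -/
lemma rightEst
    (humeas : Measurable fun x => (‖u x‖₊ : ℝ≥0∞))
    (hρm : ∀ i, Measurable (ρ i))
    (hη : LipschitzWith L η) (hη0 : ∀ x, 0 ≤ η x)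
    (hUmeas : MeasurableSet U) (hsupp : ∀ x ∉ U, η x = 0)
    (hV₀ : IsOpen V₀) (hconst : ∃ c : ℝ, ∀ x ∈ V₀, η x = c)
    (hN : volume N = 0)
    (hP : ∀ s t : ℝ, s ∈ Icc (0:ℝ) γ.len → t ∈ Icc (0:ℝ) γ.len → s ∉ N → t ∉ N → s < t →
        edist (u (gam γ s)) (u (gam γ t)) ≤
          atTop.liminf fun i => ∫⁻ r in Icc s t, ρ i (gam γ r))
    {s t z₂ : ℝ} (hs : s ∈ Icc (0:ℝ) γ.len) (ht : t ∈ Icc (0:ℝ) γ.len)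
    (htN : t ∉ N) (hz₂ : z₂ ∈ Icc s t) (hzt : z₂ < t)
    (hzero : η (gam γ z₂) = 0)
    (hnonzero : ∀ r, r ∈ Ioc z₂ t → η (gam γ r) ≠ 0)
    (hRfin : TG u ρ η L U V₀ γ s t ≠ ∞)
    (ε : ℝ≥0) (hε : 0 < ε) :
    ∃ tr, tr < t ∧ z₂ < tr ∧
      edist (η (gam γ t) • u (gam γ t)) 0 ≤ TG u ρ η L U V₀ γ tr t + 3 * (ε : ℝ≥0∞) := by
  obtain ⟨th, hth0, hthP⟩ := thresh_exists hsupp hconst hη0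
  set Ts : Set ℝ := gam γ ⁻¹' (U \ V₀) with hTs
  have hTmeas : MeasurableSet Ts := (gam_meas γ) (hUmeas.diff hV₀.measurableSet)
  set G : ℝ → ℝ≥0∞ := Ts.indicator (fun r => (L:ℝ≥0∞) * ‖u (gam γ r)‖₊) with hG
  have hGmeas : Measurable G :=
    (measurable_const.mul (humeas.comp (gam_meas γ))).indicator hTmeas
  set w : ℝ := min ((t - z₂)/2) (th/(L+1)) with hw
  have hw0 : 0 < w := lt_min (by linarith) (by positivity)
  have hwz : w ≤ (t - z₂)/2 := min_le_left _ _
  have hwth : w ≤ th/(L+1) := min_le_right _ _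
  set μG := volume.withDensity G with hμG
  have hμapp : ∀ A : Set ℝ, MeasurableSet A → μG A = ∫⁻ r in A, G r := fun A hA =>
    withDensity_apply G hA
  have hμfin : μG (Icc s t) ≠ ∞ := by
    rw [hμapp _ measurableSet_Icc]
    exact ne_top_of_le_ne_top hRfin (G_le_TG s t)
  set S : ℕ → Set ℝ := fun k => Icc z₂ (z₂ + w/(k+1)) with hS
  have hSsub : ∀ k, S k ⊆ Icc s t := by
    intro k r hr
    have h1 : w/((k:ℝ)+1) ≤ w := by
      rw [div_le_iff₀ (by positivity)]
      nlinarith [hw0.le, Nat.cast_nonneg (α := ℝ) k]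
    exact ⟨le_trans hz₂.1 hr.1, by linarith [hr.2]⟩
  have hInter : ⋂ k, S k = {z₂} := by
    ext r
    simp only [mem_iInter, mem_singleton_iff, hS, mem_Icc]
    constructor
    · intro hr
      have hrz : z₂ ≤ r := (hr 0).1
      by_contra hne
      have hlt : 0 < r - z₂ := by
        rcases lt_or_eq_of_le hrz with h|h
        · linarith
        · exact absurd h.symm hne
      obtain ⟨k, hk⟩ := exists_nat_gt (w / (r - z₂))
      have hk1 : w / (r - z₂) < (k:ℝ) + 1 := lt_of_lt_of_le hk (by linarith)
      rw [div_lt_iff₀ hlt] at hk1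
      have := (hr k).2
      have h2 : w / ((k:ℝ)+1) < r - z₂ := by
        rw [div_lt_iff₀ (by positivity)]
        nlinarith
      linarith
    · rintro rfl
      intro k
      constructor
      · exact le_rfl
      · have : 0 < w/((k:ℝ)+1) := by positivity
        linarith
  have hanti : Antitone S := by
    intro k k' hkk' r hr
    have h1 : (k:ℝ) + 1 ≤ (k':ℝ) + 1 := by exact_mod_cast Nat.succ_le_succ hkk'
    have h2 : w/((k':ℝ)+1) ≤ w/((k:ℝ)+1) :=
      div_le_div_of_nonneg_left hw0.le (by positivity) h1
    exact ⟨hr.1, le_trans hr.2 (by linarith)⟩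
  have h0 : μG {z₂} = 0 :=
    (withDensity_absolutelyContinuous volume G) Real.volume_singleton
  have htend : Tendsto (μG ∘ S) atTop (nhds 0) := by
    have htend0 := tendsto_measure_iInter_atTop (μ := μG)
      (fun k => measurableSet_Icc.nullMeasurableSet) hanti
      ⟨0, ne_top_of_le_ne_top hμfin (measure_mono (hSsub 0))⟩
    rwa [hInter, h0] at htend0
  obtain ⟨k, hk⟩ : ∃ k, μG (S k) < (ε : ℝ≥0∞) := by
    have := (htend.eventually (eventually_lt_nhds (by
      exact_mod_cast hε : (0:ℝ≥0∞) < (ε : ℝ≥0∞)))).exists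
    exact this
  set δ : ℝ := w/((k:ℝ)+1) with hδ
  have hδ0 : 0 < δ := by positivity
  have hδw : δ ≤ w := by
    rw [hδ, div_le_iff₀ (by positivity)]
    nlinarith [hw0.le, Nat.cast_nonneg (α := ℝ) k]
  set J : Set ℝ := Icc (z₂ + δ/2) (z₂ + δ) with hJ
  have hJS : J ⊆ S k := fun r hr => ⟨by linarith [hr.1], hr.2⟩
  have hJst : J ⊆ Icc s t := fun r hr => hSsub k (hJS hr)
  set h : ℝ → ℝ≥0∞ := fun r => ENNReal.ofReal (η (gam γ r)) * (‖u (gam γ r)‖₊ : ℝ≥0∞) with hh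
  have hmeas_h : Measurable h :=
    (ENNReal.measurable_ofReal.comp ((hη.continuous.comp (gam_cont γ)).measurable)).mul
      (humeas.comp (gam_meas γ))
  have hflip : LipschitzWith L (fun r => η (gam γ r)) := by
    have := hη.comp (gam_lip γ); simpa [Function.comp_def] using this
  have hLδth : (L:ℝ) * δ < th := by
    have h1 : (L:ℝ) * δ ≤ (L:ℝ) * (th/(L+1)) :=
      mul_le_mul_of_nonneg_left (le_trans hδw hwth) L.coe_nonneg
    have h2 : (L:ℝ) * (th/(L+1)) < th := by
      rw [mul_div_assoc']
      rw [div_lt_iff₀ (by positivity : (0:ℝ) < (L:ℝ)+1)]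
      nlinarith [L.coe_nonneg]
    linarith
  have hpt : ∀ r ∈ J, h r ≤ ENNReal.ofReal δ * G r := by
    intro r hr
    rcases eq_or_lt_of_le (hη0 (gam γ r)) with heq|hpos
    · simp [hh, ← heq]
    · have hdist : η (gam γ r) ≤ (L:ℝ) * δ := by
        have hd := hflip.dist_le_mul r z₂
        rw [Real.dist_eq, Real.dist_eq] at hd
        have habs : |r - z₂| ≤ δ := by
          rw [abs_le]; exact ⟨by linarith [hr.1, hδ0], by linarith [hr.2]⟩
        calc η (gam γ r) = η (gam γ r) - η (gam γ z₂) := by rw [hzero, sub_zero]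
          _ ≤ |η (gam γ r) - η (gam γ z₂)| := le_abs_self _
          _ ≤ (L:ℝ) * |r - z₂| := hd
          _ ≤ (L:ℝ) * δ := mul_le_mul_of_nonneg_left habs L.coe_nonneg
      have hrTs : r ∈ Ts := hthP _ hpos (lt_of_le_of_lt hdist hLδth)
      have hGr : G r = (L:ℝ≥0∞) * (‖u (gam γ r)‖₊ : ℝ≥0∞) := indicator_of_mem hrTs _
      rw [hGr, hh]
      calc ENNReal.ofReal (η (gam γ r)) * (‖u (gam γ r)‖₊ : ℝ≥0∞)
          ≤ ENNReal.ofReal ((L:ℝ) * δ) * (‖u (gam γ r)‖₊ : ℝ≥0∞) :=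
            mul_le_mul_left (ENNReal.ofReal_le_ofReal hdist) _
        _ = ENNReal.ofReal δ * ((L:ℝ≥0∞) * (‖u (gam γ r)‖₊ : ℝ≥0∞)) := by
            rw [ENNReal.ofReal_mul L.coe_nonneg, ENNReal.ofReal_coe_nnreal]
            ring
  have hintJ : ∫⁻ r in J, h r ≤ ENNReal.ofReal δ * (ε : ℝ≥0∞) := by
    calc ∫⁻ r in J, h r ≤ ∫⁻ r in J, ENNReal.ofReal δ * G r :=
          setLIntegral_mono (measurable_const.mul hGmeas) hpt
      _ = ENNReal.ofReal δ * ∫⁻ r in J, G r := lintegral_const_mul _ hGmeas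
      _ = ENNReal.ofReal δ * μG J := by rw [hμapp _ measurableSet_Icc]
      _ ≤ ENNReal.ofReal δ * μG (S k) := mul_le_mul_right (measure_mono hJS) _
      _ ≤ ENNReal.ofReal δ * (ε : ℝ≥0∞) := mul_le_mul_right hk.le _
  have hex : ∃ t', t' ∈ J ∧ t' ∉ N ∧ h t' ≤ 3 * (ε : ℝ≥0∞) := by
    by_contra hcon
    push_neg at hcon
    have hJN : volume (J \ N) = volume J := measure_diff_null hN
    have hvolJ : volume J = ENNReal.ofReal (δ/2) := by
      rw [hJ, Real.volume_Icc]; congr 1; ring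
    have hlow : (3 * (ε:ℝ≥0∞)) * volume J ≤ ∫⁻ r in J, h r :=
      calc (3 * (ε:ℝ≥0∞)) * volume J = (3 * (ε:ℝ≥0∞)) * volume (J \ N) := by rw [hJN]
        _ = ∫⁻ _ in J \ N, (3 * (ε:ℝ≥0∞)) := (setLIntegral_const _ _).symm
        _ ≤ ∫⁻ r in J \ N, h r :=
            setLIntegral_mono hmeas_h fun r hr => (hcon r hr.1 hr.2).le
        _ ≤ ∫⁻ r in J, h r := lintegral_mono_set diff_subset
    have hcontr : (3 * (ε:ℝ≥0∞)) * ENNReal.ofReal (δ/2)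
        ≤ ENNReal.ofReal δ * (ε : ℝ≥0∞) := by
      rw [← hvolJ]; exact le_trans hlow hintJ
    have hδd : ENNReal.ofReal δ = 2 * ENNReal.ofReal (δ/2) := by
      rw [← ENNReal.ofReal_ofNat, ← ENNReal.ofReal_mul (by norm_num)]
      congr 1; ring
    rw [hδd] at hcontr
    have hx0 : (ε : ℝ≥0∞) * ENNReal.ofReal (δ/2) ≠ 0 := by
      simp only [ne_eq, mul_eq_zero, not_or, ENNReal.coe_eq_zero, ENNReal.ofReal_eq_zero, not_le]
      exact ⟨hε.ne', by linarith⟩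
    have hxt : (ε : ℝ≥0∞) * ENNReal.ofReal (δ/2) ≠ ∞ :=
      ENNReal.mul_ne_top ENNReal.coe_ne_top ENNReal.ofReal_ne_top
    have h32 : (3:ℝ≥0∞) ≤ 2 := by
      refine (ENNReal.mul_le_mul_iff_left hx0 hxt).1 ?_
      calc (3:ℝ≥0∞) * ((ε : ℝ≥0∞) * ENNReal.ofReal (δ/2))
          = (3 * (ε:ℝ≥0∞)) * ENNReal.ofReal (δ/2) := by ring
        _ ≤ 2 * ENNReal.ofReal (δ/2) * (ε:ℝ≥0∞) := hcontr
        _ = 2 * ((ε : ℝ≥0∞) * ENNReal.ofReal (δ/2)) := by ring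
    norm_num at h32
  obtain ⟨t', ht'J, ht'N, ht'h⟩ := hex
  have ht't : t' < t := by
    have h1 := ht'J.2
    linarith [hδw, hwz]
  have hzt' : z₂ < t' := by
    have := ht'J.1
    linarith [hδ0]
  have ht'mem : t' ∈ Icc (0:ℝ) γ.len :=
    ⟨le_trans hs.1 (le_trans hz₂.1 hzt'.le), le_trans ht't.le ht.2⟩
  have hposmin : ∀ r ∈ Icc t' t, η (gam γ r) ≠ 0 := fun r hr =>
    hnonzero r ⟨lt_of_lt_of_le hzt' hr.1, hr.2⟩
  have hQfin' : (atTop.liminf fun i =>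
      ∫⁻ r in Icc t' t, ENNReal.ofReal (η (gam γ r)) * ρ i (gam γ r)) ≠ ∞ := by
    refine ne_top_of_le_ne_top hRfin (le_trans (Q_le_TG t' t) (TG_mono ?_))
    exact Icc_subset_Icc (le_trans hz₂.1 hzt'.le) le_rfl
  have hDfin' := Dfin_of_min_pos hρm hη hη0 ht't.le hposmin hQfin'
  have hcase := case1 humeas hρm hη hη0 hUmeas hsupp hV₀ hconst hN hP ht'mem ht ht'N htN
    ht't hDfin'
  refine ⟨t', ht't, hzt', ?_⟩
  calc edist (η (gam γ t) • u (gam γ t)) 0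
      ≤ edist (η (gam γ t) • u (gam γ t)) (η (gam γ t') • u (gam γ t'))
        + edist (η (gam γ t') • u (gam γ t')) 0 := edist_triangle _ _ _
    _ ≤ TG u ρ η L U V₀ γ t' t + 3 * (ε : ℝ≥0∞) := by
        refine add_le_add ?_ ?_
        · rw [edist_comm]
          exact le_trans hcase (rhs_lower humeas hρm hη hUmeas hV₀ t' t)
        · rw [edist_smul_zero' _ (hη0 _)]
          exact ht'h

/-- The grand estimate along a curve. -/
lemma grand
    (humeas : Measurable fun x => (‖u x‖₊ : ℝ≥0∞))
    (hρm : ∀ i, Measurable (ρ i))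
    (hη : LipschitzWith L η) (hη0 : ∀ x, 0 ≤ η x)
    (hUmeas : MeasurableSet U) (hsupp : ∀ x ∉ U, η x = 0)
    (hV₀ : IsOpen V₀) (hconst : ∃ c : ℝ, ∀ x ∈ V₀, η x = c)
    (hN : volume N = 0)
    (hP : ∀ s t : ℝ, s ∈ Icc (0:ℝ) γ.len → t ∈ Icc (0:ℝ) γ.len → s ∉ N → t ∉ N → s < t →
        edist (u (gam γ s)) (u (gam γ t)) ≤
          atTop.liminf fun i => ∫⁻ r in Icc s t, ρ i (gam γ r))
    {s t : ℝ} (hs : s ∈ Icc (0:ℝ) γ.len) (ht : t ∈ Icc (0:ℝ) γ.len)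
    (hsN : s ∉ N) (htN : t ∉ N) (hst : s < t) :
    edist (η (gam γ s) • u (gam γ s)) (η (gam γ t) • u (gam γ t)) ≤
      TG u ρ η L U V₀ γ s t := by
  rcases eq_or_ne (TG u ρ η L U V₀ γ s t) ∞ with hT|hRfin
  · exact hT ▸ le_top
  set Z : Set ℝ := Icc s t ∩ {r | η (gam γ r) = 0} with hZ
  have hZclosed : IsClosed Z :=
    isClosed_Icc.inter (isClosed_eq (hη.continuous.comp (gam_cont γ)) continuous_const)
  rcases Set.eq_empty_or_nonempty Z with hZe|hZne
  · have hpos : ∀ r ∈ Icc s t, η (gam γ r) ≠ 0 := fun r hr h0 =>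
      (eq_empty_iff_forall_notMem.1 hZe r) ⟨hr, h0⟩
    have hQfin := ne_top_of_le_ne_top hRfin (Q_le_TG s t)
    have hDfin := Dfin_of_min_pos hρm hη hη0 hst.le hpos hQfin
    exact le_trans (case1 humeas hρm hη hη0 hUmeas hsupp hV₀ hconst hN hP hs ht hsN htN
      hst hDfin) (rhs_lower humeas hρm hη hUmeas hV₀ s t)
  · have hbddb : BddBelow Z := ⟨s, fun r hr => hr.1.1⟩
    have hbdda : BddAbove Z := ⟨t, fun r hr => hr.1.2⟩
    set z₁ := sInf Z with hz₁def
    set z₂ := sSup Z with hz₂def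
    have hz₁Z : z₁ ∈ Z := hZclosed.csInf_mem hZne hbddb
    have hz₂Z : z₂ ∈ Z := hZclosed.csSup_mem hZne hbdda
    have hz₁₂ : z₁ ≤ z₂ := csInf_le_csSup hZne hbddb hbdda
    refine ENNReal.le_of_forall_pos_le_add fun ε hε _ => ?_
    set ε' : ℝ≥0 := ε/8 with hε'
    have hε'0 : 0 < ε' := by
      rw [hε']
      positivity
    -- left bound
    have hleft : ∃ sl, s ≤ sl ∧ sl ≤ z₁ ∧ (sl < z₁ ∨ sl = s) ∧
        edist (η (gam γ s) • u (gam γ s)) 0 ≤ TG u ρ η L U V₀ γ s sl + 3 * (ε' : ℝ≥0∞) := by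
      by_cases hs0 : η (gam γ s) = 0
      · refine ⟨s, le_rfl, hz₁Z.1.1, Or.inr rfl, ?_⟩
        rw [hs0, zero_smul, edist_self]
        exact zero_le
      · have hsz : s < z₁ :=
          lt_of_le_of_ne hz₁Z.1.1 (fun h => hs0 (by rw [← h] at hz₁Z; exact hz₁Z.2))
        have hnonzero : ∀ r, r ∈ Ico s z₁ → η (gam γ r) ≠ 0 := by
          intro r hr h0
          have hrZ : r ∈ Z := ⟨⟨hr.1, le_trans hr.2.le hz₁Z.1.2⟩, h0⟩
          exact absurd (csInf_le hbddb hrZ) (not_le.2 hr.2)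
        obtain ⟨sl, h1, h2, h3⟩ := leftEst humeas hρm hη hη0 hUmeas hsupp hV₀ hconst hN hP
          hs ht hsN hz₁Z.1 hsz hz₁Z.2 hnonzero hRfin ε' hε'0
        exact ⟨sl, h1.le, h2.le, Or.inl h2, h3⟩
    -- right bound
    have hright : ∃ tr, tr ≤ t ∧ z₂ ≤ tr ∧ (z₂ < tr ∨ tr = t) ∧
        edist (η (gam γ t) • u (gam γ t)) 0 ≤ TG u ρ η L U V₀ γ tr t + 3 * (ε' : ℝ≥0∞) := by
      by_cases ht0 : η (gam γ t) = 0
      · refine ⟨t, le_rfl, hz₂Z.1.2, Or.inr rfl, ?_⟩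
        rw [ht0, zero_smul, edist_self]
        exact zero_le
      · have hzt : z₂ < t :=
          lt_of_le_of_ne hz₂Z.1.2 (fun h => ht0 (by rw [h] at hz₂Z; exact hz₂Z.2))
        have hnonzero : ∀ r, r ∈ Ioc z₂ t → η (gam γ r) ≠ 0 := by
          intro r hr h0
          have hrZ : r ∈ Z := ⟨⟨le_trans hz₂Z.1.1 hr.1.le, hr.2⟩, h0⟩
          exact absurd (le_csSup hbdda hrZ) (not_le.2 hr.1)
        obtain ⟨tr, h1, h2, h3⟩ := rightEst humeas hρm hη hη0 hUmeas hsupp hV₀ hconst hN hP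
          hs ht htN hz₂Z.1 hzt hz₂Z.2 hnonzero hRfin ε' hε'0
        exact ⟨tr, h1.le, h2.le, Or.inl h2, h3⟩
    obtain ⟨sl, hssl, hslz, hslor, hslbound⟩ := hleft
    obtain ⟨tr, htrt, hztr, htror, htrbound⟩ := hright
    have hsltr : sl < tr := by
      rcases hslor with h|h
      · exact lt_of_lt_of_le h (le_trans hz₁₂ hztr)
      · rcases htror with h'|h'
        · exact lt_of_le_of_lt (le_trans (h ▸ hz₁Z.1.1 : sl ≤ z₁) hz₁₂) h'
        · rw [h, h']; exact hst
    have h6ε : 3 * (ε' : ℝ≥0∞) + 3 * (ε' : ℝ≥0∞) ≤ (ε : ℝ≥0∞) := by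
      have h1 : (6 * ε' : ℝ≥0) ≤ ε := by
        rw [hε']
        calc (6:ℝ≥0) * (ε/8) ≤ 8 * (ε/8) := mul_le_mul_left (by norm_num) _
          _ = ε := by rw [mul_comm, div_mul_cancel₀]; norm_num
      calc 3 * (ε' : ℝ≥0∞) + 3 * (ε' : ℝ≥0∞) = ((6 * ε' : ℝ≥0) : ℝ≥0∞) := by push_cast; ring
        _ ≤ (ε : ℝ≥0∞) := ENNReal.coe_le_coe.2 h1
    calc edist (η (gam γ s) • u (gam γ s)) (η (gam γ t) • u (gam γ t))
        ≤ edist (η (gam γ s) • u (gam γ s)) 0 + edist (η (gam γ t) • u (gam γ t)) 0 := by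
          rw [edist_comm (η (gam γ t) • u (gam γ t)) 0]
          exact edist_triangle _ _ _
      _ ≤ (TG u ρ η L U V₀ γ s sl + 3 * (ε' : ℝ≥0∞))
          + (TG u ρ η L U V₀ γ tr t + 3 * (ε' : ℝ≥0∞)) := add_le_add hslbound htrbound
      _ = (TG u ρ η L U V₀ γ s sl + TG u ρ η L U V₀ γ tr t)
          + (3 * (ε' : ℝ≥0∞) + 3 * (ε' : ℝ≥0∞)) := by ring
      _ ≤ TG u ρ η L U V₀ γ s t + (ε : ℝ≥0∞) :=
          add_le_add (TG_pair hsltr hssl htrt) h6ε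
end Side


/-- Leibniz rule for AM-bounding sequences: if `(ρ i)` is an AM-bounding sequence for `u`,
`η` is a nonnegative `L`-Lipschitz function supported in a bounded set `U` and constant on an
open set `V₀` compactly contained in `U`, then `(η ρ_i + L‖u‖χ_{U \ V₀})` is an AM-bounding
sequence for `η u`. -/
theorem statement9 {X : Type*} [MetricSpace X] [MeasurableSpace X] [BorelSpace X]
    (μ : Measure X) {V : Type*} [NormedAddCommGroup V] [NormedSpace ℝ V]
    (u : X → V) (ρ : ℕ → X → ℝ≥0∞) (η : X → ℝ) (L : ℝ≥0) (U V₀ : Set X)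
    (hρ : AMBounding μ u ρ)
    (humeas : Measurable fun x => (‖u x‖₊ : ℝ≥0∞))
    (hη : LipschitzWith L η) (hη0 : ∀ x, 0 ≤ η x)
    (hUbd : Bornology.IsBounded U) (hUmeas : MeasurableSet U)
    (hsupp : ∀ x ∉ U, η x = 0)
    (hV₀ : IsOpen V₀) (hV₀U : closure V₀ ⊆ U) (hV₀cpt : IsCompact (closure V₀))
    (hconst : ∃ c : ℝ, ∀ x ∈ V₀, η x = c) :
    AMBounding μ (fun x => η x • u x)
      (fun i x => ENNReal.ofReal (η x) * ρ i x +
        Set.indicator (U \ V₀) (fun x => (L : ℝ≥0∞) * (‖u x‖₊ : ℝ≥0∞)) x) := by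
  obtain ⟨hmeasρ, Γ, hΓ, hmain⟩ := hρ
  refine ⟨?_, Γ, hΓ, ?_⟩
  · intro i
    exact ((ENNReal.measurable_ofReal.comp hη.continuous.measurable).mul (hmeasρ i)).add
      ((measurable_const.mul humeas).indicator (hUmeas.diff hV₀.measurableSet))
  · intro γ hγ _
    obtain ⟨N, hN, hPraw⟩ := hmain γ hγ (fun r _ => mem_univ _)
    refine ⟨N, hN, ?_⟩
    intro s t hs ht hsN htN hst
    have hP : ∀ s t : ℝ, s ∈ Icc (0:ℝ) γ.len → t ∈ Icc (0:ℝ) γ.len → s ∉ N → t ∉ N → s < t →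
        edist (u (gam γ s)) (u (gam γ t)) ≤
          atTop.liminf fun i => ∫⁻ r in Icc s t, ρ i (gam γ r) := by
      intro s t hs ht hsN htN hst
      have hh := hPraw s t hs ht hsN htN hst
      rw [gam_eq γ hs, gam_eq γ ht]
      refine le_trans hh (liminf_le_liminf (Eventually.of_forall fun i => ?_))
      refine le_of_eq (setLIntegral_congr_fun measurableSet_Icc
        (fun r hr => ?_))
      rw [gam_eq γ (Icc_subset_Icc hs.1 ht.2 hr)]
    have hgoal := grand humeas hmeasρ hη hη0 hUmeas hsupp hV₀ hconst hN hP hs ht hsN htN hst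
    have hLHS : (fun x => η x • u x) (γ.toFun s) = η (gam γ s) • u (gam γ s) := by
      rw [gam_eq γ hs]
    have hLHS' : (fun x => η x • u x) (γ.toFun t) = η (gam γ t) • u (gam γ t) := by
      rw [gam_eq γ ht]
    have hRHS : (fun i => Curve.integralOn γ s t (fun x =>
        ENNReal.ofReal (η x) * ρ i x +
          Set.indicator (U \ V₀) (fun x => (L : ℝ≥0∞) * (‖u x‖₊ : ℝ≥0∞)) x))
        = fun i => ∫⁻ r in Icc s t,
          (ENNReal.ofReal (η (gam γ r)) * ρ i (gam γ r) +
            ((gam γ ⁻¹' (U \ V₀)).indicator (fun r => (L:ℝ≥0∞) * ‖u (gam γ r)‖₊)) r) := by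
      funext i
      refine setLIntegral_congr_fun measurableSet_Icc (fun r hr => ?_)
      have hgr : γ.toFun r = gam γ r := (gam_eq γ (Icc_subset_Icc hs.1 ht.2 hr)).symm
      simp only []
      rw [hgr, ← Set.indicator_comp_right (gam γ)
        (s := U \ V₀) (g := fun x => (L : ℝ≥0∞) * (‖u x‖₊ : ℝ≥0∞))]
      rfl
    rw [hLHS, hLHS']
    unfold Filter.liminf at hgoal ⊢
    rw [show (fun i => Curve.integralOn γ s t fun x =>
        ENNReal.ofReal (η x) * ρ i x +
          (U \ V₀).indicator (fun x => (L : ℝ≥0∞) * (‖u x‖₊ : ℝ≥0∞)) x)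
      = _ from hRHS]
    exact hgoal

end BVAMPaper
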